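/- arXiv:2108.08947 — 6 statements merged into one kernel-verified Lean document; each statement's English description precedes it below -/
import Mathlib

section
/- (Ljunggren's identity) For natural numbers n, α and real numbers x, y: Σ_{k=0}^{n} C(α+k, k) C(n, k) (x−y)^{n−k} y^k = Σ_{k=0}^{n} C(α, k) C(n, k) x^{n−k} y^k. -/
open Finset

lemma trinom (n j k : ℕ) :
    n.choose k * (n - k).choose j = n.choose j * (n - j).choose k := by
  rcases le_or_gt (k + j) n with h | h
  · have h1 := Nat.choose_mul (n := n) (Nat.le_add_right k j)
    have h2 := Nat.choose_mul (n := n) (Nat.le_add_left j k)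
    simp only [Nat.add_sub_cancel, Nat.add_sub_cancel_left] at h1 h2
    rw [← h1, ← h2]
    congr 1
    rw [← Nat.choose_symm (Nat.le_add_right k j), Nat.add_sub_cancel_left]
  · have e1 : n.choose k * (n - k).choose j = 0 := by
      rcases le_or_gt k n with hk | hk
      · rw [Nat.choose_eq_zero_of_lt (show n - k < j by omega), mul_zero]
      · rw [Nat.choose_eq_zero_of_lt hk, zero_mul]
    have e2 : n.choose j * (n - j).choose k = 0 := by
      rcases le_or_gt j n with hj | hj
      · rw [Nat.choose_eq_zero_of_lt (show n - j < k by omega), mul_zero]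
      · rw [Nat.choose_eq_zero_of_lt hj, zero_mul]
    rw [e1, e2]

lemma vand (a m N : ℕ) (h : m ≤ N) :
    ∑ k ∈ range (N + 1), a.choose k * m.choose k = (a + m).choose m := by
  calc ∑ k ∈ range (N + 1), a.choose k * m.choose k
      = ∑ k ∈ range (m + 1), a.choose k * m.choose k := by
        refine (Finset.sum_subset (Finset.range_subset_range.2 (by omega)) ?_).symm
        intro k _ hk
        simp only [Finset.mem_range, not_lt] at hk
        rw [Nat.choose_eq_zero_of_lt (show m < k by omega), mul_zero]
    _ = ∑ k ∈ range (m + 1), a.choose k * m.choose (m - k) := by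
        refine Finset.sum_congr rfl fun k hk => ?_
        simp only [Finset.mem_range] at hk
        rw [Nat.choose_symm (by omega)]
    _ = (a + m).choose m := by
        rw [Nat.add_choose_eq, Finset.Nat.sum_antidiagonal_eq_sum_range_succ_mk]

lemma key (n a : ℕ) (z y : ℝ) :
    ∑ k ∈ range (n + 1), ((a + k).choose k : ℝ) * (n.choose k : ℝ) * z ^ (n - k) * y ^ k =
      ∑ k ∈ range (n + 1), (a.choose k : ℝ) * (n.choose k : ℝ) * (z + y) ^ (n - k) * y ^ k := by
  calc ∑ k ∈ range (n + 1), ((a + k).choose k : ℝ) * (n.choose k : ℝ) * z ^ (n - k) * y ^ k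
      = ∑ j ∈ range (n + 1),
          ((a + (n - j)).choose (n - j) : ℝ) * (n.choose j : ℝ) * z ^ j * y ^ (n - j) := by
        rw [← Finset.sum_range_reflect]
        refine Finset.sum_congr rfl fun j hj => ?_
        simp only [Finset.mem_range] at hj
        rw [show n + 1 - 1 - j = n - j by omega, show n - (n - j) = j by omega,
          Nat.choose_symm (by omega)]
    _ = ∑ j ∈ range (n + 1), ∑ k ∈ range (n + 1),
          (a.choose k : ℝ) * (n.choose j : ℝ) * ((n - j).choose k : ℝ) * z ^ j * y ^ (n - j) := by
        refine Finset.sum_congr rfl fun j hj => ?_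
        simp only [Finset.mem_range] at hj
        rw [← Finset.sum_mul, ← Finset.sum_mul]
        have hv : ∑ i ∈ range (n + 1), (a.choose i : ℝ) * (n.choose j : ℝ) *
            ((n - j).choose i : ℝ) = ((a + (n - j)).choose (n - j) : ℝ) * (n.choose j : ℝ) := by
          rw [← vand a (n - j) n (by omega)]
          push_cast
          rw [Finset.sum_mul]
          exact Finset.sum_congr rfl fun i _ => by ring
        rw [hv]
    _ = ∑ k ∈ range (n + 1), ∑ j ∈ range (n + 1),
          (a.choose k : ℝ) * (n.choose j : ℝ) * ((n - j).choose k : ℝ) * z ^ j * y ^ (n - j) :=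
        Finset.sum_comm
    _ = ∑ k ∈ range (n + 1), ∑ j ∈ range (n + 1),
          (a.choose k : ℝ) * (n.choose k : ℝ) * ((n - k).choose j : ℝ) * z ^ j * y ^ (n - j) := by
        refine Finset.sum_congr rfl fun k _ => Finset.sum_congr rfl fun j _ => ?_
        have := trinom n j k
        have h2 : ((n.choose j : ℝ) * ((n - j).choose k : ℝ)) =
            ((n.choose k : ℝ) * ((n - k).choose j : ℝ)) := by
          rw [← Nat.cast_mul, ← Nat.cast_mul, ← this]
        ring_nf
        ring_nf at h2
        rw [mul_comm] at h2
        calc (a.choose k : ℝ) * (n.choose j : ℝ) * ((n - j).choose k : ℝ) * z ^ j * y ^ (n - j)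
            = (a.choose k : ℝ) * ((n.choose j : ℝ) * ((n - j).choose k : ℝ)) * z ^ j *
              y ^ (n - j) := by ring
          _ = _ := by rw [← Nat.cast_mul, ← this, Nat.cast_mul]; ring
    _ = ∑ k ∈ range (n + 1), ∑ j ∈ range (n - k + 1),
          (a.choose k : ℝ) * (n.choose k : ℝ) * ((n - k).choose j : ℝ) * z ^ j * y ^ (n - j) := by
        refine Finset.sum_congr rfl fun k hk => ?_
        refine (Finset.sum_subset (Finset.range_subset_range.2 (by omega)) ?_).symm
        intro j _ hj
        simp only [Finset.mem_range, not_lt] at hj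
        rw [Nat.choose_eq_zero_of_lt (show n - k < j by omega)]
        push_cast
        ring
    _ = ∑ k ∈ range (n + 1), (a.choose k : ℝ) * (n.choose k : ℝ) * (z + y) ^ (n - k) * y ^ k := by
        refine Finset.sum_congr rfl fun k hk => ?_
        simp only [Finset.mem_range] at hk
        rw [add_pow]
        rw [Finset.mul_sum, Finset.sum_mul]
        refine Finset.sum_congr rfl fun j hj => ?_
        simp only [Finset.mem_range] at hj
        rw [show n - j = (n - k - j) + k by omega, pow_add]
        ring

theorem ljunggren_identity (n α : ℕ) (x y : ℝ) :
    ∑ k ∈ range (n + 1),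
        ((α + k).choose k : ℝ) * (n.choose k : ℝ) * (x - y) ^ (n - k) * y ^ k =
      ∑ k ∈ range (n + 1), (α.choose k : ℝ) * (n.choose k : ℝ) * x ^ (n - k) * y ^ k := by
  have := key n α (x - y) y
  rwa [sub_add_cancel] at this
end

section
/- (Special case of Ljunggren's identity) For natural numbers n, α and a real number y: Σ_{k=0}^{n} C(α+k, k) C(n, k) (1−y)^{n−k} y^k = Σ_{k=0}^{n} C(α, k) C(n, k) y^k. -/
open Finset

lemma vand_choose (α k : ℕ) :
    ((α + k).choose k : ℝ) = ∑ i ∈ range (k + 1), (α.choose i : ℝ) * (k.choose i : ℝ) := by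
  rw [Nat.add_choose_eq, Finset.Nat.sum_antidiagonal_eq_sum_range_succ_mk]
  push_cast
  refine Finset.sum_congr rfl fun i hi => ?_
  rw [Nat.choose_symm (Nat.lt_succ_iff.mp (mem_range.mp hi))]

lemma my_inner_sum (n i : ℕ) (hi : i ≤ n) (y : ℝ) :
    ∑ k ∈ range (n + 1), (n.choose k : ℝ) * (k.choose i : ℝ) * (1 - y) ^ (n - k) * y ^ k =
      (n.choose i : ℝ) * y ^ i := by
  rw [range_eq_Ico, ← Finset.sum_Ico_consecutive _ (Nat.zero_le i) (by omega)]
  have h0 : ∑ k ∈ Ico 0 i, (n.choose k : ℝ) * (k.choose i : ℝ) * (1 - y) ^ (n - k) * y ^ k = 0 := by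
    refine Finset.sum_eq_zero fun k hk => ?_
    rw [Nat.choose_eq_zero_of_lt (mem_Ico.mp hk).2]
    simp
  rw [h0, zero_add, Finset.sum_Ico_eq_sum_range]
  have hN : n + 1 - i = (n - i) + 1 := by omega
  rw [hN]
  have key : ∀ m ∈ range (n - i + 1),
      (n.choose (i + m) : ℝ) * ((i + m).choose i : ℝ) * (1 - y) ^ (n - (i + m)) * y ^ (i + m)
        = (n.choose i : ℝ) * y ^ i * (y ^ m * (1 - y) ^ (n - i - m) * ((n - i).choose m : ℝ)) := by
    intro m hm
    have hm' : m ≤ n - i := Nat.lt_succ_iff.mp (mem_range.mp hm)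
    have h1 : n.choose (i + m) * (i + m).choose i = n.choose i * (n - i).choose m := by
      rw [Nat.choose_mul (by omega)]
      congr 1
      · congr 1; omega
    have h2 : n - (i + m) = n - i - m := by omega
    have := congrArg (Nat.cast : ℕ → ℝ) h1
    push_cast at this
    rw [h2, pow_add]
    rw [this]; ring
  rw [Finset.sum_congr rfl key, ← Finset.mul_sum, ← add_pow y (1 - y) (n - i)]
  simp

theorem ljunggren_identity_one (n α : ℕ) (y : ℝ) :
    ∑ k ∈ range (n + 1),
        ((α + k).choose k : ℝ) * (n.choose k : ℝ) * (1 - y) ^ (n - k) * y ^ k =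
      ∑ k ∈ range (n + 1), (α.choose k : ℝ) * (n.choose k : ℝ) * y ^ k := by
  have step1 : ∀ k ∈ range (n + 1),
      ((α + k).choose k : ℝ) * (n.choose k : ℝ) * (1 - y) ^ (n - k) * y ^ k
        = ∑ i ∈ range (n + 1),
            (α.choose i : ℝ) * ((n.choose k : ℝ) * (k.choose i : ℝ) * (1 - y) ^ (n - k) * y ^ k) := by
    intro k hk
    have hk' : k ≤ n := Nat.lt_succ_iff.mp (mem_range.mp hk)
    rw [vand_choose, Finset.sum_mul, Finset.sum_mul, Finset.sum_mul]
    rw [← Finset.sum_subset (Finset.range_subset_range.mpr (Nat.succ_le_succ hk'))]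
    · exact Finset.sum_congr rfl fun i _ => by ring
    · intro i _ hi
      have h0 : k.choose i = 0 := Nat.choose_eq_zero_of_lt (by simpa using hi)
      simp [h0]
  rw [Finset.sum_congr rfl step1, Finset.sum_comm]
  refine Finset.sum_congr rfl fun i hi => ?_
  rw [← Finset.mul_sum, my_inner_sum n i (Nat.lt_succ_iff.mp (mem_range.mp hi)) y]
  ring
end

section
/- For a real number α (with α, α+1, … avoiding nonpositive values so all factors are nonzero) and natural numbers r ≥ l: Σ_{j=l}^{r} C(r, j) (α−1)_{r−j} (j!)²/(j−l)! = (r! · l!/(r−l)!) · (α+l)_{r−l}. -/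
open Polynomial Finset

/-- Ascending factorial (Pochhammer symbol) `(a)_n` for a real number `a`. -/
noncomputable def asc (a : ℝ) (n : ℕ) : ℝ := (ascPochhammer ℝ n).eval a

lemma asc_succ (x : ℝ) (n : ℕ) : asc x (n + 1) = asc x n * (x + n) :=
  ascPochhammer_succ_eval n x

/-- Chu–Vandermonde identity for the ascending factorial over ℝ. -/
lemma asc_add_eq (a b : ℝ) (k : ℕ) :
    asc (a + b) k = ∑ ij ∈ Finset.HasAntidiagonal.antidiagonal k,
      (k.choose ij.1 : ℝ) * (asc a ij.1 * asc b ij.2) := by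
  induction k with
  | zero => simp [asc]
  | succ k ih =>
    rw [asc_succ, ih, Finset.sum_mul,
      Finset.sum_antidiagonal_choose_succ_mul (fun i j => asc a i * asc b j) k,
      ← Finset.sum_add_distrib]
    refine Finset.sum_congr rfl fun ij hij => ?_
    have hij' : ij.1 + ij.2 = k := Finset.HasAntidiagonal.mem_antidiagonal.mp hij
    have hc : (k.choose ij.2 : ℝ) = (k.choose ij.1 : ℝ) := by
      rw [Nat.choose_symm_of_eq_add hij'.symm]
    have hk : (a + b + (k : ℝ)) = (b + ij.2) + (a + ij.1) := by
      rw [← hij']; push_cast; ring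
    rw [asc_succ, asc_succ, hc, hk]
    ring

theorem sum_choose_asc_factorial (α : ℝ) (hα : 0 < α) (r l : ℕ) (hlr : l ≤ r) :
    ∑ j ∈ Finset.Icc l r,
        (r.choose j : ℝ) * asc (α - 1) (r - j) * ((j.factorial : ℝ) ^ 2 / ((j - l).factorial : ℝ)) =
      (r.factorial : ℝ) * (l.factorial : ℝ) / ((r - l).factorial : ℝ) * asc (α + l) (r - l) := by
  have hαl : α + (l : ℝ) = ((l : ℝ) + 1) + (α - 1) := by ring
  rw [hαl, asc_add_eq, Finset.Nat.sum_antidiagonal_eq_sum_range_succ_mk, Finset.mul_sum]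
  refine Finset.sum_nbij' (fun j => j - l) (fun p => l + p) ?_ ?_ ?_ ?_ ?_
  · intro j hj
    simp only [Finset.mem_Icc] at hj
    simp only [Finset.mem_range]
    omega
  · intro p hp
    simp only [Finset.mem_range] at hp
    simp only [Finset.mem_Icc]
    omega
  · intro j hj; simp only [Finset.mem_Icc] at hj; omega
  · intro p hp; simp only [Finset.mem_range] at hp; omega
  · intro j hj
    simp only [Finset.mem_Icc] at hj
    obtain ⟨h1, h2⟩ := hj
    -- rewrite asc (l+1) (j-l) as a factorial ratio
    have hascnat : asc ((l : ℝ) + 1) (j - l) = ((l + (j - l)).factorial : ℝ) / (l.factorial : ℝ) := by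
      have h := Nat.factorial_mul_ascFactorial l (j - l)
      have : asc ((l : ℝ) + 1) (j - l) = ((l + 1).ascFactorial (j - l) : ℝ) := by
        rw [asc, ← ascPochhammer_nat_eq_ascFactorial, ascPochhammer_eval_cast]
        push_cast
        ring_nf
      rw [this]
      field_simp
      rw [mul_comm]
      have hjl : l + (j - l) = j := by omega
      exact_mod_cast h
    have hjl : l + (j - l) = j := by omega
    rw [hascnat, hjl]
    have hsub : r - l - (j - l) = r - j := by omega
    rw [hsub]
    have hfac0 : (l.factorial : ℝ) ≠ 0 := Nat.cast_ne_zero.mpr l.factorial_ne_zero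
    have hfac1 : ((j - l).factorial : ℝ) ≠ 0 := Nat.cast_ne_zero.mpr (j - l).factorial_ne_zero
    have hfac2 : ((r - l).factorial : ℝ) ≠ 0 := Nat.cast_ne_zero.mpr (r - l).factorial_ne_zero
    -- reduce to a factorial identity
    have hch1 : (r.choose j : ℝ) = (r.factorial : ℝ) / ((j.factorial : ℝ) * ((r - j).factorial : ℝ)) :=
      Nat.cast_choose ℝ h2
    have hch2 : ((r - l).choose (j - l) : ℝ) =
        ((r - l).factorial : ℝ) / (((j - l).factorial : ℝ) * ((r - l - (j - l)).factorial : ℝ)) :=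
      Nat.cast_choose ℝ (by omega)
    rw [hch1, hch2, hsub]
    have hfac3 : (j.factorial : ℝ) ≠ 0 := Nat.cast_ne_zero.mpr j.factorial_ne_zero
    have hfac4 : ((r - j).factorial : ℝ) ≠ 0 := Nat.cast_ne_zero.mpr (r - j).factorial_ne_zero
    field_simp
end

section
/- Let (L₁, L₂) have a Multinomial distribution with m trials and probabilities θ₁, θ₂ (θ₁, θ₂ > 0, θ₁+θ₂ < 1). Then for all natural numbers j₁, j₂: E[(L₁+1)_{j₁} (L₂+1)_{j₂}] = j₁!·j₂!· Σ_{l₂=0}^{m} C(j₂,l₂) C(m,l₂) θ₂^{l₂} Σ_{l₁=0}^{m−l₂} C(j₁,l₁) C(m−l₂,l₁) θ₁^{l₁}. -/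
open Polynomial Finset

private lemma asc_eq (l j : ℕ) : asc ((l : ℝ) + 1) j = (j.factorial : ℝ) * ((l + j).choose l : ℝ) := by
  have h : ((l : ℝ) + 1) = ((l + 1 : ℕ) : ℝ) := by push_cast; ring
  have hsymm : (l + j).choose j = (l + j).choose l := by
    rw [← Nat.choose_symm (Nat.le_add_left j l), Nat.add_sub_cancel]
  rw [asc, h, ← ascPochhammer_eval_cast, ascPochhammer_nat_eq_ascFactorial,
      Nat.ascFactorial_eq_factorial_mul_choose, hsymm]
  push_cast
  ring

private lemma vdm (j l : ℕ) :
    ∑ k ∈ range (l + 1), j.choose k * l.choose k = (j + l).choose l := by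
  rw [Nat.add_choose_eq, Finset.Nat.sum_antidiagonal_eq_sum_range_succ_mk]
  refine Finset.sum_congr rfl fun k hk => ?_
  have hk' : k ≤ l := by simpa [Nat.lt_succ_iff] using mem_range.mp hk
  rw [Nat.choose_symm hk']

private lemma choose_trinom {a b n : ℕ} (h : a + b ≤ n) :
    n.choose a * (n - a).choose b = n.choose b * (n - b).choose a := by
  have h1 := Nat.choose_mul (n := n) (Nat.le_add_right a b)
  have h2 := Nat.choose_mul (n := n) (Nat.le_add_left b a)
  rw [Nat.add_sub_cancel_left] at h1
  rw [Nat.add_sub_cancel] at h2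
  rw [← h1, ← h2, Nat.choose_symm_add]

private lemma lemB (n k : ℕ) (hk : k ≤ n) (x y : ℝ) :
    ∑ l ∈ range (n + 1), (l.choose k : ℝ) * (n.choose l : ℝ) * x ^ l * y ^ (n - l)
      = (n.choose k : ℝ) * x ^ k * (x + y) ^ (n - k) := by
  rw [add_pow]
  rw [Finset.range_eq_Ico, ← Finset.sum_Ico_consecutive _ (Nat.zero_le k) (by omega : k ≤ n + 1)]
  have hz : ∑ l ∈ Finset.Ico 0 k, (l.choose k : ℝ) * (n.choose l : ℝ) * x ^ l * y ^ (n - l) = 0 := by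
    refine Finset.sum_eq_zero fun l hl => ?_
    have : l < k := (Finset.mem_Ico.mp hl).2
    rw [Nat.choose_eq_zero_of_lt this]
    push_cast; ring
  rw [hz, zero_add, Finset.sum_Ico_eq_sum_range]
  have hn1 : n + 1 - k = n - k + 1 := by omega
  rw [hn1, Finset.mul_sum]
  apply Finset.sum_congr rfl
  intro i hi
  have hi' : i ≤ n - k := by simpa [Nat.lt_succ_iff] using mem_range.mp hi
  have hki : k + i ≤ n := by omega
  have hc := Nat.choose_mul (n := n) (Nat.le_add_right k i)
  rw [Nat.add_sub_cancel_left] at hc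
  have hcc : ((n.choose (k + i) : ℕ) : ℝ) * ((k + i).choose k : ℕ) =
      ((n.choose k : ℕ) : ℝ) * ((n - k).choose i : ℕ) := by exact_mod_cast hc
  have hexp : n - (k + i) = n - k - i := by omega
  rw [hexp, pow_add]
  push_cast at hcc ⊢
  linear_combination (x ^ k * x ^ i * y ^ (n - k - i)) * hcc

private lemma lemA (n j : ℕ) (x y : ℝ) :
    ∑ l ∈ range (n + 1), asc ((l : ℝ) + 1) j * (n.choose l : ℝ) * x ^ l * y ^ (n - l)
      = (j.factorial : ℝ) * ∑ k ∈ range (n + 1),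
          (j.choose k : ℝ) * (n.choose k : ℝ) * x ^ k * (x + y) ^ (n - k) := by
  calc
    ∑ l ∈ range (n + 1), asc ((l : ℝ) + 1) j * (n.choose l : ℝ) * x ^ l * y ^ (n - l)
        = ∑ l ∈ range (n + 1), ∑ k ∈ range (n + 1),
            (j.factorial : ℝ) * (j.choose k : ℝ) * (l.choose k : ℝ) * (n.choose l : ℝ) *
              x ^ l * y ^ (n - l) := by
      refine Finset.sum_congr rfl fun l hl => ?_
      have hl' : l ≤ n := by simpa [Nat.lt_succ_iff] using mem_range.mp hl
      have hv : ((l + j).choose l : ℝ) = ∑ k ∈ range (n + 1), (j.choose k : ℝ) * (l.choose k : ℝ) := by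
        have hsub : range (l + 1) ⊆ range (n + 1) := by
          intro a ha; simp only [mem_range] at *; omega
        have h1 : ((l + j).choose l : ℝ) =
            ∑ k ∈ range (l + 1), (j.choose k : ℝ) * (l.choose k : ℝ) := by
          rw [Nat.add_comm l j, ← vdm j l]; push_cast; ring
        rw [h1]
        refine (Finset.sum_subset hsub fun k _ hk => ?_)
        have : l < k := by
          by_contra hc
          exact hk (mem_range.mpr (by omega))
        rw [Nat.choose_eq_zero_of_lt this]
        push_cast; ring
      rw [asc_eq, hv, Finset.mul_sum, Finset.sum_mul, Finset.sum_mul, Finset.sum_mul]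
      exact Finset.sum_congr rfl fun k _ => by ring
    _ = ∑ k ∈ range (n + 1), ∑ l ∈ range (n + 1),
            (j.factorial : ℝ) * (j.choose k : ℝ) * (l.choose k : ℝ) * (n.choose l : ℝ) *
              x ^ l * y ^ (n - l) := Finset.sum_comm
    _ = (j.factorial : ℝ) * ∑ k ∈ range (n + 1),
          (j.choose k : ℝ) * (n.choose k : ℝ) * x ^ k * (x + y) ^ (n - k) := by
      rw [Finset.mul_sum]
      refine Finset.sum_congr rfl fun k hk => ?_
      have hk' : k ≤ n := by simpa [Nat.lt_succ_iff] using mem_range.mp hk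
      have hfac : ∑ l ∈ range (n + 1), (j.factorial : ℝ) * (j.choose k : ℝ) * (l.choose k : ℝ) *
            (n.choose l : ℝ) * x ^ l * y ^ (n - l)
          = ((j.factorial : ℝ) * (j.choose k : ℝ)) *
            ∑ l ∈ range (n + 1), (l.choose k : ℝ) * (n.choose l : ℝ) * x ^ l * y ^ (n - l) := by
        rw [Finset.mul_sum]
        exact Finset.sum_congr rfl fun l _ => by ring
      rw [hfac, lemB n k hk' x y]
      ring

/-- Factorial moments `E[(L₁+1)_{j₁} (L₂+1)_{j₂}]` of a Multinomial `(m, θ₁, θ₂)` vector. -/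
theorem multinomial_factorial_moment (m : ℕ) (θ1 θ2 : ℝ) (h1 : 0 < θ1) (h2 : 0 < θ2)
    (hsum : θ1 + θ2 < 1) (j1 j2 : ℕ) :
    ∑ l1 ∈ range (m + 1), ∑ l2 ∈ range (m - l1 + 1),
        asc ((l1 : ℝ) + 1) j1 * asc ((l2 : ℝ) + 1) j2 *
          ((m.factorial : ℝ) /
              ((l1.factorial : ℝ) * (l2.factorial : ℝ) * ((m - l1 - l2).factorial : ℝ)) *
            θ1 ^ l1 * θ2 ^ l2 * (1 - θ1 - θ2) ^ (m - l1 - l2)) =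
      (j1.factorial : ℝ) * (j2.factorial : ℝ) *
        ∑ l2 ∈ range (m + 1), (j2.choose l2 : ℝ) * (m.choose l2 : ℝ) * θ2 ^ l2 *
          ∑ l1 ∈ range (m - l2 + 1),
            (j1.choose l1 : ℝ) * ((m - l2).choose l1 : ℝ) * θ1 ^ l1 := by
  calc
    ∑ l1 ∈ range (m + 1), ∑ l2 ∈ range (m - l1 + 1),
        asc ((l1 : ℝ) + 1) j1 * asc ((l2 : ℝ) + 1) j2 *
          ((m.factorial : ℝ) /
              ((l1.factorial : ℝ) * (l2.factorial : ℝ) * ((m - l1 - l2).factorial : ℝ)) *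
            θ1 ^ l1 * θ2 ^ l2 * (1 - θ1 - θ2) ^ (m - l1 - l2))
      = ∑ l1 ∈ range (m + 1), (asc ((l1 : ℝ) + 1) j1 * (m.choose l1 : ℝ) * θ1 ^ l1) *
          ∑ l2 ∈ range (m - l1 + 1),
            asc ((l2 : ℝ) + 1) j2 * ((m - l1).choose l2 : ℝ) * θ2 ^ l2 *
              (1 - θ1 - θ2) ^ (m - l1 - l2) := by
      refine Finset.sum_congr rfl fun l1 hl1 => ?_
      rw [Finset.mul_sum]
      refine Finset.sum_congr rfl fun l2 hl2 => ?_
      have hl1' : l1 ≤ m := by simpa [Nat.lt_succ_iff] using mem_range.mp hl1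
      have hl2' : l2 ≤ m - l1 := by simpa [Nat.lt_succ_iff] using mem_range.mp hl2
      have e1 := Nat.choose_mul_factorial_mul_factorial hl1'
      have e2 := Nat.choose_mul_factorial_mul_factorial hl2'
      have hfact : m.choose l1 * ((m - l1).choose l2) *
          (l1.factorial * l2.factorial * (m - l1 - l2).factorial) = m.factorial := by
        calc m.choose l1 * ((m - l1).choose l2) *
              (l1.factorial * l2.factorial * (m - l1 - l2).factorial)
            = m.choose l1 * l1.factorial *
              ((m - l1).choose l2 * l2.factorial * (m - l1 - l2).factorial) := by ring
          _ = m.choose l1 * l1.factorial * (m - l1).factorial := by rw [e2]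
          _ = m.factorial := e1
      have hden : (l1.factorial : ℝ) * (l2.factorial : ℝ) * ((m - l1 - l2).factorial : ℝ) ≠ 0 := by
        positivity
      have hcoef : (m.factorial : ℝ) /
            ((l1.factorial : ℝ) * (l2.factorial : ℝ) * ((m - l1 - l2).factorial : ℝ))
          = (m.choose l1 : ℝ) * ((m - l1).choose l2 : ℝ) := by
        rw [div_eq_iff hden]
        exact_mod_cast congrArg (Nat.cast : ℕ → ℝ) hfact.symm
      rw [hcoef]; ring
    _ = ∑ l1 ∈ range (m + 1), (asc ((l1 : ℝ) + 1) j1 * (m.choose l1 : ℝ) * θ1 ^ l1) *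
          ((j2.factorial : ℝ) * ∑ k ∈ range (m - l1 + 1),
            (j2.choose k : ℝ) * ((m - l1).choose k : ℝ) * θ2 ^ k * (1 - θ1) ^ (m - l1 - k)) := by
      refine Finset.sum_congr rfl fun l1 _ => ?_
      congr 1
      have h := lemA (m - l1) j2 θ2 (1 - θ1 - θ2)
      rw [show θ2 + (1 - θ1 - θ2) = 1 - θ1 by ring] at h
      exact h
    _ = ∑ l1 ∈ range (m + 1), ∑ k ∈ range (m - l1 + 1),
          (j2.factorial : ℝ) * (j2.choose k : ℝ) * (m.choose l1 : ℝ) *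
            ((m - l1).choose k : ℝ) * θ2 ^ k * (1 - θ1) ^ (m - l1 - k) *
            (asc ((l1 : ℝ) + 1) j1 * θ1 ^ l1) := by
      refine Finset.sum_congr rfl fun l1 _ => ?_
      rw [Finset.mul_sum, Finset.mul_sum]
      exact Finset.sum_congr rfl fun k _ => by ring
    _ = ∑ k ∈ range (m + 1), ∑ l1 ∈ range (m - k + 1),
          (j2.factorial : ℝ) * (j2.choose k : ℝ) * (m.choose l1 : ℝ) *
            ((m - l1).choose k : ℝ) * θ2 ^ k * (1 - θ1) ^ (m - l1 - k) *
            (asc ((l1 : ℝ) + 1) j1 * θ1 ^ l1) := by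
      refine Finset.sum_comm' fun l1 k => ?_
      simp only [mem_range]
      omega
    _ = ∑ k ∈ range (m + 1),
          ((j2.factorial : ℝ) * (j2.choose k : ℝ) * (m.choose k : ℝ) * θ2 ^ k) *
          ∑ l1 ∈ range (m - k + 1),
            asc ((l1 : ℝ) + 1) j1 * ((m - k).choose l1 : ℝ) * θ1 ^ l1 *
              (1 - θ1) ^ (m - k - l1) := by
      refine Finset.sum_congr rfl fun k hk => ?_
      rw [Finset.mul_sum]
      refine Finset.sum_congr rfl fun l1 hl1 => ?_
      have hk' : k ≤ m := by simpa [Nat.lt_succ_iff] using mem_range.mp hk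
      have hl1' : l1 ≤ m - k := by simpa [Nat.lt_succ_iff] using mem_range.mp hl1
      have htri := choose_trinom (show l1 + k ≤ m by omega)
      have hcc : (m.choose l1 : ℝ) * ((m - l1).choose k : ℝ) =
          (m.choose k : ℝ) * ((m - k).choose l1 : ℝ) := by exact_mod_cast htri
      rw [show m - l1 - k = m - k - l1 from Nat.sub_right_comm m l1 k]
      linear_combination ((j2.factorial : ℝ) * (j2.choose k : ℝ) * θ2 ^ k *
        (1 - θ1) ^ (m - k - l1) * asc ((l1 : ℝ) + 1) j1 * θ1 ^ l1) * hcc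
    _ = ∑ k ∈ range (m + 1),
          ((j2.factorial : ℝ) * (j2.choose k : ℝ) * (m.choose k : ℝ) * θ2 ^ k) *
          ((j1.factorial : ℝ) * ∑ l1 ∈ range (m - k + 1),
            (j1.choose l1 : ℝ) * ((m - k).choose l1 : ℝ) * θ1 ^ l1) := by
      refine Finset.sum_congr rfl fun k _ => ?_
      congr 1
      have h := lemA (m - k) j1 θ1 (1 - θ1)
      rw [show θ1 + (1 - θ1) = 1 by ring] at h
      simpa using h
    _ = (j1.factorial : ℝ) * (j2.factorial : ℝ) *
        ∑ l2 ∈ range (m + 1), (j2.choose l2 : ℝ) * (m.choose l2 : ℝ) * θ2 ^ l2 *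
          ∑ l1 ∈ range (m - l2 + 1),
            (j1.choose l1 : ℝ) * ((m - l2).choose l1 : ℝ) * θ1 ^ l1 := by
      rw [Finset.mul_sum]
      exact Finset.sum_congr rfl fun k _ => by ring
end

section
/- Let (X'₁, X'₂) ~ NcDir²(α₁,α₂,α₃,λ₁,λ₂,λ₃), i.e. the mixture where conditionally on independent Poisson variables M_i ~ Poisson(λ_i/2), the vector (X'₁,X'₂) is Dirichlet with parameters (α₁+M₁, α₂+M₂, α₃+M₃). Then for all r₁,r₂ ∈ ℕ: E[(X'₁)^{r₁}(X'₂)^{r₂}] = ((α₁)_{r₁}(α₂)_{r₂}/(α⁺)_{r⁺}) e^{−λ⁺/2} Σ_{j₁=0}^{r₁} Σ_{j₂=0}^{r₂} [C(r₁,j₁)C(r₂,j₂)(α⁺)_{j⁺}(λ₁/2)^{j₁}(λ₂/2)^{j₂} / ((α⁺+r⁺)_{j⁺}(α₁)_{j₁}(α₂)_{j₂})] · ₁F₁(α⁺+j⁺; α⁺+r⁺+j⁺; λ⁺/2), where r⁺=r₁+r₂, j⁺=j₁+j₂, α⁺=α₁+α₂+α₃, λ⁺=λ₁+λ₂+λ₃.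 -/
open Polynomial

/-- Kummer confluent hypergeometric function `₁F₁(a; b; x)`. -/
noncomputable def F11 (a b x : ℝ) : ℝ := ∑' i : ℕ, asc a i / asc b i * x ^ i / (i.factorial : ℝ)

lemma asc_zero (a : ℝ) : asc a 0 = 1 := by simp [asc]

lemma asc_succ_right (a : ℝ) (n : ℕ) : asc a (n + 1) = asc a n * (a + n) := by
  simp [asc, ascPochhammer_succ_right]

lemma asc_succ_left (a : ℝ) (n : ℕ) : asc a (n + 1) = a * asc (a + 1) n := by
  simp [asc, ascPochhammer_succ_left, eval_comp]

lemma asc_pos {a : ℝ} (ha : 0 < a) (n : ℕ) : 0 < asc a n := ascPochhammer_pos n a ha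

lemma asc_add (a : ℝ) (n m : ℕ) : asc a (n + m) = asc a n * asc (a + n) m := by
  have h := congrArg (Polynomial.eval a) (ascPochhammer_mul ℝ n m)
  simpa [asc, eval_comp] using h.symm

lemma asc_le_asc {a b : ℝ} (ha : 0 < a) (hab : a ≤ b) (n : ℕ) : asc a n ≤ asc b n := by
  induction n with
  | zero => simp [asc_zero]
  | succ n ih =>
    rw [asc_succ_right, asc_succ_right]
    have h1 : (0:ℝ) < asc a n := asc_pos ha n
    have h2 : (0:ℝ) ≤ a + n := by positivity
    apply mul_le_mul ih (by linarith) h2 ((asc_pos (lt_of_lt_of_le ha hab) n).le)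

lemma descFactorial_cast_succ (j k : ℕ) :
    (j.descFactorial (k + 1) : ℝ) = ((j : ℝ) - k) * j.descFactorial k := by
  rcases le_or_gt k j with h | h
  · rw [Nat.descFactorial_succ]
    push_cast [h]
    ring
  · rw [Nat.descFactorial_eq_zero_iff_lt.2 h, Nat.descFactorial_eq_zero_iff_lt.2 (Nat.lt_succ_of_lt h)]
    simp

lemma descFactorial_add_factorial (m k : ℕ) :
    (m + k).descFactorial k * m.factorial = (m + k).factorial := by
  induction k with
  | zero => simp
  | succ k ih =>
    have h : m + (k + 1) = (m + k) + 1 := rfl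
    rw [h, Nat.succ_descFactorial_succ, Nat.factorial_succ, mul_assoc, ih]

lemma asc_vandermonde (r : ℕ) (a : ℝ) (j : ℕ) :
    asc (a + j) r = ∑ k ∈ Finset.range (r + 1),
      (r.choose k : ℝ) * (asc (a + k) (r - k) * (j.descFactorial k : ℝ)) := by
  induction r generalizing a with
  | zero => simp [asc_zero]
  | succ r ih =>
    rw [asc_succ_left]
    have ha1 : a + (j:ℝ) + 1 = (a + 1) + (j:ℝ) := by ring
    rw [ha1, ih (a + 1), Finset.mul_sum]
    have split : ∀ k ∈ Finset.range (r + 1),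
        (a + (j:ℝ)) * ((r.choose k : ℝ) * (asc (a + 1 + k) (r - k) * (j.descFactorial k : ℝ)))
        = (r.choose k : ℝ) * (asc (a + k) (r - k + 1) * (j.descFactorial k : ℝ))
          + (r.choose k : ℝ) * (asc (a + 1 + k) (r - k) * (j.descFactorial (k + 1) : ℝ)) := by
      intro k _
      have h1 : asc (a + k) (r - k + 1) = (a + k) * asc (a + 1 + k) (r - k) := by
        rw [asc_succ_left]; ring_nf
      rw [h1, descFactorial_cast_succ]
      ring
    rw [Finset.sum_congr rfl split, Finset.sum_add_distrib]
    rw [Finset.sum_range_succ' (fun k => ((r+1).choose k : ℝ) *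
      (asc (a + k) (r + 1 - k) * (j.descFactorial k : ℝ))) (r + 1)]
    have hS1 : ∑ k ∈ Finset.range (r + 1),
        (r.choose k : ℝ) * (asc (a + k) (r - k + 1) * (j.descFactorial k : ℝ))
        = (∑ k ∈ Finset.range r,
            (r.choose (k+1) : ℝ) * (asc (a + ((k+1 : ℕ) : ℝ)) (r - (k+1) + 1) * (j.descFactorial (k+1) : ℝ)))
          + asc a (r + 1) := by
      rw [Finset.sum_range_succ' (fun k => (r.choose k : ℝ) *
        (asc (a + k) (r - k + 1) * (j.descFactorial k : ℝ))) r]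
      simp
    rw [hS1]
    have hsplit2 : ∀ k ∈ Finset.range (r + 1),
        (((r+1).choose (k+1) : ℕ) : ℝ) * (asc (a + ((k+1 : ℕ) : ℝ)) (r + 1 - (k+1)) * (j.descFactorial (k+1) : ℝ))
        = (r.choose k : ℝ) * (asc (a + 1 + k) (r - k) * (j.descFactorial (k+1) : ℝ))
          + (r.choose (k+1) : ℝ) * (asc (a + ((k+1 : ℕ) : ℝ)) (r - k) * (j.descFactorial (k+1) : ℝ)) := by
      intro k _
      have hch : (((r+1).choose (k+1) : ℕ) : ℝ) = (r.choose k : ℝ) + (r.choose (k+1) : ℝ) := by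
        rw [Nat.choose_succ_succ]; push_cast; ring
      have hsub : r + 1 - (k + 1) = r - k := by omega
      have hcast : a + (((k+1 : ℕ)) : ℝ) = a + 1 + (k : ℝ) := by push_cast; ring
      rw [hsub, hch, hcast]
      ring
    rw [Finset.sum_congr rfl hsplit2, Finset.sum_add_distrib]
    have hS3 : ∑ k ∈ Finset.range (r + 1),
        (r.choose (k+1) : ℝ) * (asc (a + ((k+1 : ℕ) : ℝ)) (r - k) * (j.descFactorial (k+1) : ℝ))
        = ∑ k ∈ Finset.range r,
            (r.choose (k+1) : ℝ) * (asc (a + ((k+1 : ℕ) : ℝ)) (r - (k+1) + 1) * (j.descFactorial (k+1) : ℝ)) := by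
      rw [Finset.sum_range_succ, Nat.choose_succ_self]
      push_cast
      rw [zero_mul, add_zero]
      apply Finset.sum_congr rfl
      intro k hk
      have hk' : k < r := Finset.mem_range.mp hk
      have h2 : r - (k+1) + 1 = r - k := by omega
      rw [h2]
    rw [hS3]
    have h0 : (((r+1).choose 0 : ℕ) : ℝ) * (asc (a + ((0:ℕ) : ℝ)) (r + 1 - 0) * ((j.descFactorial 0 : ℕ) : ℝ))
        = asc a (r + 1) := by simp
    rw [h0]
    ring

section Part2

lemma summable_pair_aux {h : ℕ → ℝ} (h0 : ∀ n, 0 ≤ h n) (h1 : ∀ n, h n ≤ 1)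
    {x y : ℝ} (hx : 0 ≤ x) (hy : 0 ≤ y) :
    Summable (fun pq : ℕ × ℕ =>
      h (pq.1 + pq.2) * (x ^ pq.1 / pq.1.factorial) * (y ^ pq.2 / pq.2.factorial)) := by
  have hxy : Summable (fun pq : ℕ × ℕ => (x ^ pq.1 / pq.1.factorial) * (y ^ pq.2 / pq.2.factorial)) :=
    Summable.mul_of_nonneg (f := fun n : ℕ => x ^ n / n.factorial)
      (g := fun n : ℕ => y ^ n / n.factorial) (Real.summable_pow_div_factorial x)
      (Real.summable_pow_div_factorial y) (fun n => by positivity) (fun n => by positivity)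
  refine Summable.of_nonneg_of_le
    (fun pq => mul_nonneg (mul_nonneg (h0 _) (by positivity)) (by positivity))
    (fun pq => ?_) hxy
  have hA : (0:ℝ) ≤ x ^ pq.1 / pq.1.factorial := by positivity
  have hB : (0:ℝ) ≤ y ^ pq.2 / pq.2.factorial := by positivity
  calc h (pq.1 + pq.2) * (x ^ pq.1 / pq.1.factorial) * (y ^ pq.2 / pq.2.factorial)
      ≤ 1 * (x ^ pq.1 / pq.1.factorial) * (y ^ pq.2 / pq.2.factorial) := by
        apply mul_le_mul_of_nonneg_right (mul_le_mul_of_nonneg_right (h1 _) hA) hB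
    _ = (x ^ pq.1 / pq.1.factorial) * (y ^ pq.2 / pq.2.factorial) := by ring

lemma summable_triple_aux {h : ℕ → ℝ} (h0 : ∀ n, 0 ≤ h n) (h1 : ∀ n, h n ≤ 1)
    {x y z : ℝ} (hx : 0 ≤ x) (hy : 0 ≤ y) (hz : 0 ≤ z) :
    Summable (fun m : ℕ × ℕ × ℕ =>
      h (m.1 + m.2.1 + m.2.2) * (x ^ m.1 / m.1.factorial) *
        (y ^ m.2.1 / m.2.1.factorial) * (z ^ m.2.2 / m.2.2.factorial)) := by
  have hyz : Summable (fun w : ℕ × ℕ => (y ^ w.1 / w.1.factorial) * (z ^ w.2 / w.2.factorial)) :=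
    Summable.mul_of_nonneg (f := fun n : ℕ => y ^ n / n.factorial)
      (g := fun n : ℕ => z ^ n / n.factorial) (Real.summable_pow_div_factorial y)
      (Real.summable_pow_div_factorial z) (fun n => by positivity) (fun n => by positivity)
  have hbig : Summable (fun m : ℕ × ℕ × ℕ =>
      (x ^ m.1 / m.1.factorial) * ((y ^ m.2.1 / m.2.1.factorial) * (z ^ m.2.2 / m.2.2.factorial))) :=
    Summable.mul_of_nonneg (f := fun n : ℕ => x ^ n / n.factorial)
      (g := fun w : ℕ × ℕ => (y ^ w.1 / w.1.factorial) * (z ^ w.2 / w.2.factorial))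
      (Real.summable_pow_div_factorial x) hyz
      (fun n => by positivity) (fun w => mul_nonneg (by positivity) (by positivity))
  refine Summable.of_nonneg_of_le
    (fun m => mul_nonneg (mul_nonneg (mul_nonneg (h0 _) (by positivity)) (by positivity)) (by positivity))
    (fun m => ?_) hbig
  have hA : (0:ℝ) ≤ x ^ m.1 / m.1.factorial := by positivity
  have hB : (0:ℝ) ≤ y ^ m.2.1 / m.2.1.factorial := by positivity
  have hC : (0:ℝ) ≤ z ^ m.2.2 / m.2.2.factorial := by positivity
  have := h1 (m.1 + m.2.1 + m.2.2)
  have := h0 (m.1 + m.2.1 + m.2.2)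
  nlinarith [mul_nonneg hA hB, mul_nonneg (mul_nonneg hA hB) hC]

lemma tsum_antidiag {f : ℕ × ℕ → ℝ} (hf : Summable f) :
    ∑' pq : ℕ × ℕ, f pq = ∑' n : ℕ, ∑ kl ∈ Finset.HasAntidiagonal.antidiagonal n, f kl := by
  calc ∑' pq, f pq
      = ∑' x : Σ n : ℕ, Finset.HasAntidiagonal.antidiagonal n, f (Finset.HasAntidiagonal.sigmaAntidiagonalEquivProd x) :=
        (Finset.HasAntidiagonal.sigmaAntidiagonalEquivProd.tsum_eq f).symm
    _ = ∑' (n : ℕ) (c : Finset.HasAntidiagonal.antidiagonal n), f (Finset.HasAntidiagonal.sigmaAntidiagonalEquivProd ⟨n, c⟩) := by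
        apply Summable.tsum_sigma'
        · intro n
          exact Summable.of_finite
        · exact (Finset.HasAntidiagonal.sigmaAntidiagonalEquivProd).summable_iff.2 hf
    _ = ∑' n : ℕ, ∑ kl ∈ Finset.HasAntidiagonal.antidiagonal n, f kl := by
        refine tsum_congr fun n => ?_
        exact Finset.tsum_subtype (Finset.HasAntidiagonal.antidiagonal n) f

lemma sum_antidiag_pow (x y : ℝ) (n : ℕ) :
    ∑ kl ∈ Finset.HasAntidiagonal.antidiagonal n, (x ^ kl.1 / kl.1.factorial) * (y ^ kl.2 / kl.2.factorial)
      = (x + y) ^ n / n.factorial := by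
  rw [Finset.Nat.sum_antidiagonal_eq_sum_range_succ_mk, add_pow, Finset.sum_div]
  apply Finset.sum_congr rfl
  intro i hi
  have hin : i ≤ n := Nat.lt_succ_iff.mp (Finset.mem_range.mp hi)
  have hfact : (n.factorial : ℝ) = (n.choose i : ℝ) * i.factorial * (n - i).factorial := by
    exact_mod_cast (Nat.choose_mul_factorial_mul_factorial hin).symm
  have h1 : (i.factorial : ℝ) ≠ 0 := Nat.cast_ne_zero.2 i.factorial_ne_zero
  have h2 : ((n - i).factorial : ℝ) ≠ 0 := Nat.cast_ne_zero.2 (n - i).factorial_ne_zero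
  have h3 : (n.factorial : ℝ) ≠ 0 := Nat.cast_ne_zero.2 n.factorial_ne_zero
  field_simp
  rw [hfact]
  ring

lemma tsum_pair_collapse {h : ℕ → ℝ} (h0 : ∀ n, 0 ≤ h n) (h1 : ∀ n, h n ≤ 1)
    {x y : ℝ} (hx : 0 ≤ x) (hy : 0 ≤ y) :
    ∑' pq : ℕ × ℕ, h (pq.1 + pq.2) * (x ^ pq.1 / pq.1.factorial) * (y ^ pq.2 / pq.2.factorial)
      = ∑' n : ℕ, h n * ((x + y) ^ n / n.factorial) := by
  rw [tsum_antidiag (summable_pair_aux h0 h1 hx hy)]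
  refine tsum_congr fun n => ?_
  have : ∀ kl ∈ Finset.HasAntidiagonal.antidiagonal n,
      h (kl.1 + kl.2) * (x ^ kl.1 / kl.1.factorial) * (y ^ kl.2 / kl.2.factorial)
      = h n * ((x ^ kl.1 / kl.1.factorial) * (y ^ kl.2 / kl.2.factorial)) := by
    intro kl hkl
    rw [Finset.HasAntidiagonal.mem_antidiagonal.mp hkl]
    ring
  rw [Finset.sum_congr rfl this, ← Finset.mul_sum, sum_antidiag_pow]

lemma tsum_triple_collapse {h : ℕ → ℝ} (h0 : ∀ n, 0 ≤ h n) (h1 : ∀ n, h n ≤ 1)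
    {x y z : ℝ} (hx : 0 ≤ x) (hy : 0 ≤ y) (hz : 0 ≤ z) :
    ∑' m : ℕ × ℕ × ℕ,
        h (m.1 + m.2.1 + m.2.2) * (x ^ m.1 / m.1.factorial) *
          (y ^ m.2.1 / m.2.1.factorial) * (z ^ m.2.2 / m.2.2.factorial)
      = ∑' n : ℕ, h n * ((x + y + z) ^ n / n.factorial) := by
  have hF := summable_triple_aux h0 h1 hx hy hz
  rw [Summable.tsum_prod' hF (fun a => hF.prod_factor a)]
  have step1 : ∀ a : ℕ,
      (∑' w : ℕ × ℕ, h (a + w.1 + w.2) * (x ^ a / a.factorial) *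
        (y ^ w.1 / w.1.factorial) * (z ^ w.2 / w.2.factorial))
      = (x ^ a / a.factorial) * ∑' n : ℕ, h (a + n) * ((y + z) ^ n / n.factorial) := by
    intro a
    have hcollapse := tsum_pair_collapse (h := fun n => h (a + n))
      (fun n => h0 _) (fun n => h1 _) hy hz
    rw [← hcollapse, ← tsum_mul_left]
    refine tsum_congr fun w => ?_
    rw [show a + w.1 + w.2 = a + (w.1 + w.2) by omega]
    ring
  rw [tsum_congr step1]
  have hg := summable_pair_aux (h := h) h0 h1 (x := x) (y := y + z) hx (by linarith)
  have step2 : (∑' (a : ℕ), (x ^ a / a.factorial) * ∑' n : ℕ, h (a + n) * ((y + z) ^ n / n.factorial))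
      = ∑' pq : ℕ × ℕ, h (pq.1 + pq.2) * (x ^ pq.1 / pq.1.factorial) *
          ((y + z) ^ pq.2 / pq.2.factorial) := by
    rw [Summable.tsum_prod' hg (fun a => hg.prod_factor a)]
    refine tsum_congr fun a => ?_
    rw [← tsum_mul_left]
    refine tsum_congr fun n => ?_
    ring
  rw [step2, tsum_pair_collapse h0 h1 hx (by linarith : (0:ℝ) ≤ y + z)]
  exact tsum_congr fun n => by rw [add_assoc]

end Part2

lemma ncdir_inner_sum (a b x1 x2 x3 : ℝ) (ha : 0 < a) (hab : a ≤ b)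
    (hx1 : 0 ≤ x1) (hx2 : 0 ≤ x2) (hx3 : 0 ≤ x3) (k1 k2 : ℕ) :
    Summable (fun j : ℕ × ℕ × ℕ => (j.1.descFactorial k1 : ℝ) * (j.2.1.descFactorial k2 : ℝ) *
        (asc a (j.1 + j.2.1 + j.2.2) / asc b (j.1 + j.2.1 + j.2.2)) *
        (x1 ^ j.1 / j.1.factorial) * (x2 ^ j.2.1 / j.2.1.factorial) *
        (x3 ^ j.2.2 / j.2.2.factorial))
    ∧ (∑' j : ℕ × ℕ × ℕ, (j.1.descFactorial k1 : ℝ) * (j.2.1.descFactorial k2 : ℝ) *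
        (asc a (j.1 + j.2.1 + j.2.2) / asc b (j.1 + j.2.1 + j.2.2)) *
        (x1 ^ j.1 / j.1.factorial) * (x2 ^ j.2.1 / j.2.1.factorial) *
        (x3 ^ j.2.2 / j.2.2.factorial))
      = x1 ^ k1 * x2 ^ k2 * (asc a (k1 + k2) / asc b (k1 + k2)) *
          F11 (a + ((k1 + k2 : ℕ) : ℝ)) (b + ((k1 + k2 : ℕ) : ℝ)) (x1 + x2 + x3) := by
  have hb : 0 < b := lt_of_lt_of_le ha hab
  set f : ℕ × ℕ × ℕ → ℝ := fun j => (j.1.descFactorial k1 : ℝ) * (j.2.1.descFactorial k2 : ℝ) *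
        (asc a (j.1 + j.2.1 + j.2.2) / asc b (j.1 + j.2.1 + j.2.2)) *
        (x1 ^ j.1 / j.1.factorial) * (x2 ^ j.2.1 / j.2.1.factorial) *
        (x3 ^ j.2.2 / j.2.2.factorial) with hf
  set e : ℕ × ℕ × ℕ → ℕ × ℕ × ℕ := fun m => (m.1 + k1, m.2.1 + k2, m.2.2) with hedef
  have he : Function.Injective e := by
    intro m m' hmm
    simp only [e, Prod.mk.injEq] at hmm
    obtain ⟨h1', h2', h3'⟩ := hmm
    exact Prod.ext (by omega) (Prod.ext (by omega) h3')
  have hsupp : ∀ j : ℕ × ℕ × ℕ, j ∉ Set.range e → f j = 0 := by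
    intro j hj
    by_cases hk1 : k1 ≤ j.1
    · by_cases hk2 : k2 ≤ j.2.1
      · exfalso
        refine hj ⟨(j.1 - k1, j.2.1 - k2, j.2.2), ?_⟩
        simp only [e, Prod.ext_iff]
        refine ⟨by omega, by omega, trivial⟩
      · have : j.2.1.descFactorial k2 = 0 := Nat.descFactorial_eq_zero_iff_lt.2 (by omega)
        simp [hf, this]
    · have : j.1.descFactorial k1 = 0 := Nat.descFactorial_eq_zero_iff_lt.2 (by omega)
      simp [hf, this]
  set h : ℕ → ℝ := fun n => asc a (n + (k1 + k2)) / asc b (n + (k1 + k2)) with hh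
  have h0 : ∀ n, 0 ≤ h n := fun n => le_of_lt (div_pos (asc_pos ha _) (asc_pos hb _))
  have h1 : ∀ n, h n ≤ 1 := fun n =>
    (div_le_one (asc_pos hb _)).2 (asc_le_asc ha hab _)
  have hkey : ∀ p : ℕ, ∀ x : ℝ, 0 ≤ x → ∀ k : ℕ,
      ((p + k).descFactorial k : ℝ) * (x ^ (p + k) / (p + k).factorial)
        = x ^ k * (x ^ p / p.factorial) := by
    intro p x hx k
    have hd : (((p + k).descFactorial k : ℕ) : ℝ) * (p.factorial : ℝ) = ((p + k).factorial : ℝ) := by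
      exact_mod_cast descFactorial_add_factorial p k
    have f1 : ((p + k).factorial : ℝ) ≠ 0 := Nat.cast_ne_zero.2 (p + k).factorial_ne_zero
    have f2 : (p.factorial : ℝ) ≠ 0 := Nat.cast_ne_zero.2 p.factorial_ne_zero
    field_simp
    rw [pow_add]
    linear_combination (x ^ p * x ^ k) * hd
  have hcomp : ∀ m : ℕ × ℕ × ℕ, f (e m) = (x1 ^ k1 * x2 ^ k2) *
      (h (m.1 + m.2.1 + m.2.2) * (x1 ^ m.1 / m.1.factorial) *
        (x2 ^ m.2.1 / m.2.1.factorial) * (x3 ^ m.2.2 / m.2.2.factorial)) := by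
    intro m
    have harg : (m.1 + k1) + (m.2.1 + k2) + m.2.2 = (m.1 + m.2.1 + m.2.2) + (k1 + k2) := by omega
    simp only [hf, e]
    rw [harg]
    have e1 := hkey m.1 x1 hx1 k1
    have e2 := hkey m.2.1 x2 hx2 k2
    calc ((m.1 + k1).descFactorial k1 : ℝ) * ((m.2.1 + k2).descFactorial k2 : ℝ) *
          (asc a ((m.1 + m.2.1 + m.2.2) + (k1 + k2)) / asc b ((m.1 + m.2.1 + m.2.2) + (k1 + k2))) *
          (x1 ^ (m.1 + k1) / (m.1 + k1).factorial) * (x2 ^ (m.2.1 + k2) / (m.2.1 + k2).factorial) *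
          (x3 ^ m.2.2 / m.2.2.factorial)
        = (((m.1 + k1).descFactorial k1 : ℝ) * (x1 ^ (m.1 + k1) / (m.1 + k1).factorial)) *
          (((m.2.1 + k2).descFactorial k2 : ℝ) * (x2 ^ (m.2.1 + k2) / (m.2.1 + k2).factorial)) *
          h (m.1 + m.2.1 + m.2.2) * (x3 ^ m.2.2 / m.2.2.factorial) := by rw [hh]; ring
      _ = (x1 ^ k1 * (x1 ^ m.1 / m.1.factorial)) * (x2 ^ k2 * (x2 ^ m.2.1 / m.2.1.factorial)) *
          h (m.1 + m.2.1 + m.2.2) * (x3 ^ m.2.2 / m.2.2.factorial) := by rw [e1, e2]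
      _ = (x1 ^ k1 * x2 ^ k2) * (h (m.1 + m.2.1 + m.2.2) * (x1 ^ m.1 / m.1.factorial) *
          (x2 ^ m.2.1 / m.2.1.factorial) * (x3 ^ m.2.2 / m.2.2.factorial)) := by ring
  have hsumtriple := summable_triple_aux h0 h1 hx1 hx2 hx3
  have hsumcomp : Summable (f ∘ e) := by
    apply Summable.congr (hsumtriple.mul_left (x1 ^ k1 * x2 ^ k2))
    intro m
    exact (hcomp m).symm
  have hsumf : Summable f := (he.summable_iff hsupp).1 hsumcomp
  constructor
  · exact hsumf
  · have htsum : ∑' j, f j = ∑' m, f (e m) :=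
      (he.tsum_eq (Function.support_subset_iff.2 (by
        intro j hj
        by_contra hcon
        exact hj (hsupp j hcon)))).symm
    rw [htsum, tsum_congr hcomp, tsum_mul_left, tsum_triple_collapse h0 h1 hx1 hx2 hx3]
    have hfin : ∑' n : ℕ, h n * ((x1 + x2 + x3) ^ n / n.factorial)
        = (asc a (k1 + k2) / asc b (k1 + k2)) *
          ∑' n : ℕ, asc (a + ((k1 + k2 : ℕ) : ℝ)) n / asc (b + ((k1 + k2 : ℕ) : ℝ)) n *
            (x1 + x2 + x3) ^ n / n.factorial := by
      rw [← tsum_mul_left]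
      refine tsum_congr fun n => ?_
      have ha1 : asc a (n + (k1 + k2)) = asc a (k1 + k2) * asc (a + ((k1 + k2 : ℕ) : ℝ)) n := by
        rw [add_comm n (k1 + k2)]; exact asc_add a (k1 + k2) n
      have hb1 : asc b (n + (k1 + k2)) = asc b (k1 + k2) * asc (b + ((k1 + k2 : ℕ) : ℝ)) n := by
        rw [add_comm n (k1 + k2)]; exact asc_add b (k1 + k2) n
      have p1 : asc a (k1 + k2) ≠ 0 := (asc_pos ha _).ne'
      have p2 : asc b (k1 + k2) ≠ 0 := (asc_pos hb _).ne'
      have p3 : asc (b + ((k1 + k2 : ℕ) : ℝ)) n ≠ 0 :=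
        (asc_pos (by positivity : (0:ℝ) < b + ((k1 + k2 : ℕ) : ℝ)) n).ne'
      have p4 : (n.factorial : ℝ) ≠ 0 := Nat.cast_ne_zero.2 n.factorial_ne_zero
      rw [hh]
      dsimp only
      rw [ha1, hb1]
      field_simp
    rw [hfin, F11]
    ring

set_option maxHeartbeats 1000000 in
open Finset in
/-- Mixed raw moments of the bivariate Non-central Dirichlet distribution
`NcDir²(α₁,α₂,α₃,λ₁,λ₂,λ₃)`, defined through its Poisson mixture representation. -/
theorem ncdir_mixed_moment (α1 α2 α3 lam1 lam2 lam3 : ℝ)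
    (h1 : 0 < α1) (h2 : 0 < α2) (h3 : 0 < α3)
    (hl1 : 0 ≤ lam1) (hl2 : 0 ≤ lam2) (hl3 : 0 ≤ lam3)
    (hlplus : 0 < lam1 + lam2 + lam3) (r1 r2 : ℕ) :
    (∑' j : ℕ × ℕ × ℕ,
        (Real.exp (-(lam1 / 2)) * (lam1 / 2) ^ j.1 / (j.1.factorial : ℝ)) *
          (Real.exp (-(lam2 / 2)) * (lam2 / 2) ^ j.2.1 / (j.2.1.factorial : ℝ)) *
          (Real.exp (-(lam3 / 2)) * (lam3 / 2) ^ j.2.2 / (j.2.2.factorial : ℝ)) *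
          (asc (α1 + j.1) r1 * asc (α2 + j.2.1) r2 /
            asc (α1 + α2 + α3 + (j.1 + j.2.1 + j.2.2)) (r1 + r2))) =
      asc α1 r1 * asc α2 r2 / asc (α1 + α2 + α3) (r1 + r2) *
        Real.exp (-((lam1 + lam2 + lam3) / 2)) *
        ∑ j1 ∈ range (r1 + 1), ∑ j2 ∈ range (r2 + 1),
          (r1.choose j1 : ℝ) * (r2.choose j2 : ℝ) * asc (α1 + α2 + α3) (j1 + j2) *
              (lam1 / 2) ^ j1 * (lam2 / 2) ^ j2 /
              (asc (α1 + α2 + α3 + (r1 + r2)) (j1 + j2) * asc α1 j1 * asc α2 j2) *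
            F11 (α1 + α2 + α3 + (j1 + j2)) (α1 + α2 + α3 + (r1 + r2) + (j1 + j2))
              ((lam1 + lam2 + lam3) / 2) := by
  have hA : (0:ℝ) < α1 + α2 + α3 := by linarith
  have hb0 : (0:ℝ) < α1 + α2 + α3 + ((r1 + r2 : ℕ) : ℝ) := by positivity
  have hab : (α1 + α2 + α3 : ℝ) ≤ α1 + α2 + α3 + ((r1 + r2 : ℕ) : ℝ) :=
    le_add_of_nonneg_right (Nat.cast_nonneg _)
  have hx1 : (0:ℝ) ≤ lam1 / 2 := by linarith
  have hx2 : (0:ℝ) ≤ lam2 / 2 := by linarith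
  have hx3 : (0:ℝ) ≤ lam3 / 2 := by linarith
  have hE : Real.exp (-(lam1 / 2)) * Real.exp (-(lam2 / 2)) * Real.exp (-(lam3 / 2))
      = Real.exp (-((lam1 + lam2 + lam3) / 2)) := by
    rw [← Real.exp_add, ← Real.exp_add]; ring_nf
  have inner := fun (k1 k2 : ℕ) => ncdir_inner_sum (α1 + α2 + α3)
    (α1 + α2 + α3 + ((r1 + r2 : ℕ) : ℝ)) (lam1 / 2) (lam2 / 2) (lam3 / 2)
    hA hab hx1 hx2 hx3 k1 k2
  -- the pointwise expansion
  have pointwise : ∀ j : ℕ × ℕ × ℕ,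
      (Real.exp (-(lam1 / 2)) * (lam1 / 2) ^ j.1 / (j.1.factorial : ℝ)) *
          (Real.exp (-(lam2 / 2)) * (lam2 / 2) ^ j.2.1 / (j.2.1.factorial : ℝ)) *
          (Real.exp (-(lam3 / 2)) * (lam3 / 2) ^ j.2.2 / (j.2.2.factorial : ℝ)) *
          (asc (α1 + j.1) r1 * asc (α2 + j.2.1) r2 /
            asc (α1 + α2 + α3 + (j.1 + j.2.1 + j.2.2)) (r1 + r2))
        = ∑ k1 ∈ range (r1 + 1), ∑ k2 ∈ range (r2 + 1),
            (Real.exp (-((lam1 + lam2 + lam3) / 2)) *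
              ((r1.choose k1 : ℝ) * (r2.choose k2 : ℝ) * asc (α1 + k1) (r1 - k1) *
                asc (α2 + k2) (r2 - k2) / asc (α1 + α2 + α3) (r1 + r2))) *
            ((j.1.descFactorial k1 : ℝ) * (j.2.1.descFactorial k2 : ℝ) *
              (asc (α1 + α2 + α3) (j.1 + j.2.1 + j.2.2) /
                asc (α1 + α2 + α3 + ((r1 + r2 : ℕ) : ℝ)) (j.1 + j.2.1 + j.2.2)) *
              ((lam1 / 2) ^ j.1 / j.1.factorial) * ((lam2 / 2) ^ j.2.1 / j.2.1.factorial) *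
              ((lam3 / 2) ^ j.2.2 / j.2.2.factorial)) := by
    intro j
    have hcast : α1 + α2 + α3 + ((j.1 : ℝ) + j.2.1 + j.2.2)
        = α1 + α2 + α3 + ((j.1 + j.2.1 + j.2.2 : ℕ) : ℝ) := by push_cast; ring
    rw [hcast]
    have hV1 := asc_vandermonde r1 α1 j.1
    have hV2 := asc_vandermonde r2 α2 j.2.1
    have p1 : (0:ℝ) < asc (α1 + α2 + α3) (r1 + r2) := asc_pos hA _
    have p2 : (0:ℝ) < asc (α1 + α2 + α3 + ((r1 + r2 : ℕ) : ℝ)) (j.1 + j.2.1 + j.2.2) :=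
      asc_pos hb0 _
    have p3 : (0:ℝ) < asc (α1 + α2 + α3 + ((j.1 + j.2.1 + j.2.2 : ℕ) : ℝ)) (r1 + r2) :=
      asc_pos (by positivity) _
    have hfrac : asc (α1 + α2 + α3) (r1 + r2) *
          asc (α1 + α2 + α3 + ((r1 + r2 : ℕ) : ℝ)) (j.1 + j.2.1 + j.2.2)
        = asc (α1 + α2 + α3) (j.1 + j.2.1 + j.2.2) *
          asc (α1 + α2 + α3 + ((j.1 + j.2.1 + j.2.2 : ℕ) : ℝ)) (r1 + r2) := by
      rw [← asc_add, ← asc_add, add_comm (r1 + r2) (j.1 + j.2.1 + j.2.2)]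
    have hinv : asc (α1 + α2 + α3) (j.1 + j.2.1 + j.2.2) /
          asc (α1 + α2 + α3 + ((r1 + r2 : ℕ) : ℝ)) (j.1 + j.2.1 + j.2.2) /
          asc (α1 + α2 + α3) (r1 + r2)
        = 1 / asc (α1 + α2 + α3 + ((j.1 + j.2.1 + j.2.2 : ℕ) : ℝ)) (r1 + r2) := by
      rw [div_div, div_eq_div_iff (by positivity) p3.ne']
      linear_combination -hfrac
    symm
    calc ∑ k1 ∈ range (r1 + 1), ∑ k2 ∈ range (r2 + 1),
            (Real.exp (-((lam1 + lam2 + lam3) / 2)) *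
              ((r1.choose k1 : ℝ) * (r2.choose k2 : ℝ) * asc (α1 + k1) (r1 - k1) *
                asc (α2 + k2) (r2 - k2) / asc (α1 + α2 + α3) (r1 + r2))) *
            ((j.1.descFactorial k1 : ℝ) * (j.2.1.descFactorial k2 : ℝ) *
              (asc (α1 + α2 + α3) (j.1 + j.2.1 + j.2.2) /
                asc (α1 + α2 + α3 + ((r1 + r2 : ℕ) : ℝ)) (j.1 + j.2.1 + j.2.2)) *
              ((lam1 / 2) ^ j.1 / j.1.factorial) * ((lam2 / 2) ^ j.2.1 / j.2.1.factorial) *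
              ((lam3 / 2) ^ j.2.2 / j.2.2.factorial))
        = ∑ k1 ∈ range (r1 + 1), ∑ k2 ∈ range (r2 + 1),
            ((r1.choose k1 : ℝ) * (asc (α1 + k1) (r1 - k1) * (j.1.descFactorial k1 : ℝ))) *
            (((r2.choose k2 : ℝ) * (asc (α2 + k2) (r2 - k2) * (j.2.1.descFactorial k2 : ℝ))) *
              (Real.exp (-((lam1 + lam2 + lam3) / 2)) *
                (asc (α1 + α2 + α3) (j.1 + j.2.1 + j.2.2) /
                  asc (α1 + α2 + α3 + ((r1 + r2 : ℕ) : ℝ)) (j.1 + j.2.1 + j.2.2) /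
                  asc (α1 + α2 + α3) (r1 + r2)) *
                ((lam1 / 2) ^ j.1 / j.1.factorial) * ((lam2 / 2) ^ j.2.1 / j.2.1.factorial) *
                ((lam3 / 2) ^ j.2.2 / j.2.2.factorial))) := by
          refine Finset.sum_congr rfl fun k1 _ => Finset.sum_congr rfl fun k2 _ => ?_
          ring
      _ = ∑ k1 ∈ range (r1 + 1),
            ((r1.choose k1 : ℝ) * (asc (α1 + k1) (r1 - k1) * (j.1.descFactorial k1 : ℝ))) *
            ((∑ k2 ∈ range (r2 + 1),
              (r2.choose k2 : ℝ) * (asc (α2 + k2) (r2 - k2) * (j.2.1.descFactorial k2 : ℝ))) *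
              (Real.exp (-((lam1 + lam2 + lam3) / 2)) *
                (asc (α1 + α2 + α3) (j.1 + j.2.1 + j.2.2) /
                  asc (α1 + α2 + α3 + ((r1 + r2 : ℕ) : ℝ)) (j.1 + j.2.1 + j.2.2) /
                  asc (α1 + α2 + α3) (r1 + r2)) *
                ((lam1 / 2) ^ j.1 / j.1.factorial) * ((lam2 / 2) ^ j.2.1 / j.2.1.factorial) *
                ((lam3 / 2) ^ j.2.2 / j.2.2.factorial))) := by
          refine Finset.sum_congr rfl fun k1 _ => ?_
          rw [← Finset.mul_sum, ← Finset.sum_mul]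
      _ = asc (α1 + (j.1 : ℝ)) r1 * (asc (α2 + (j.2.1 : ℝ)) r2 *
              (Real.exp (-((lam1 + lam2 + lam3) / 2)) *
                (asc (α1 + α2 + α3) (j.1 + j.2.1 + j.2.2) /
                  asc (α1 + α2 + α3 + ((r1 + r2 : ℕ) : ℝ)) (j.1 + j.2.1 + j.2.2) /
                  asc (α1 + α2 + α3) (r1 + r2)) *
                ((lam1 / 2) ^ j.1 / j.1.factorial) * ((lam2 / 2) ^ j.2.1 / j.2.1.factorial) *
                ((lam3 / 2) ^ j.2.2 / j.2.2.factorial))) := by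
          rw [← Finset.sum_mul, ← hV1, ← hV2]
      _ = (Real.exp (-(lam1 / 2)) * (lam1 / 2) ^ j.1 / (j.1.factorial : ℝ)) *
          (Real.exp (-(lam2 / 2)) * (lam2 / 2) ^ j.2.1 / (j.2.1.factorial : ℝ)) *
          (Real.exp (-(lam3 / 2)) * (lam3 / 2) ^ j.2.2 / (j.2.2.factorial : ℝ)) *
          (asc (α1 + j.1) r1 * asc (α2 + j.2.1) r2 /
            asc (α1 + α2 + α3 + ((j.1 + j.2.1 + j.2.2 : ℕ) : ℝ)) (r1 + r2)) := by
          rw [hinv, ← hE]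
          ring
  rw [tsum_congr pointwise]
  rw [Summable.tsum_finsetSum (fun k1 _ => summable_sum (fun k2 _ => Summable.mul_left _ (inner k1 k2).1))]
  rw [Finset.sum_congr rfl (fun k1 _ =>
    Summable.tsum_finsetSum (fun k2 _ => Summable.mul_left _ (inner k1 k2).1))]
  rw [Finset.sum_congr rfl (fun k1 _ => Finset.sum_congr rfl (fun k2 _ => by
    rw [tsum_mul_left, (inner k1 k2).2]))]
  -- now both sides are double sums; compare termwise
  rw [Finset.mul_sum]
  refine Finset.sum_congr rfl fun k1 hk1 => ?_
  rw [Finset.mul_sum]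
  refine Finset.sum_congr rfl fun k2 hk2 => ?_
  have hk1' : k1 ≤ r1 := Nat.lt_succ_iff.mp (Finset.mem_range.mp hk1)
  have hk2' : k2 ≤ r2 := Nat.lt_succ_iff.mp (Finset.mem_range.mp hk2)
  have e1 : asc α1 r1 = asc α1 k1 * asc (α1 + k1) (r1 - k1) := by
    rw [← asc_add]; congr 1; omega
  have e2 : asc α2 r2 = asc α2 k2 * asc (α2 + k2) (r2 - k2) := by
    rw [← asc_add]; congr 1; omega
  have c1 : α1 + α2 + α3 + ((r1 : ℝ) + (r2 : ℝ)) = α1 + α2 + α3 + ((r1 + r2 : ℕ) : ℝ) := by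
    push_cast; ring
  have c3 : α1 + α2 + α3 + ((k1 : ℝ) + (k2 : ℝ)) = α1 + α2 + α3 + ((k1 + k2 : ℕ) : ℝ) := by
    push_cast; ring
  have c4 : α1 + α2 + α3 + ((r1 : ℝ) + (r2 : ℝ)) + ((k1 : ℝ) + (k2 : ℝ))
      = α1 + α2 + α3 + ((r1 + r2 : ℕ) : ℝ) + ((k1 + k2 : ℕ) : ℝ) := by push_cast; ring
  have c5 : (lam1 + lam2 + lam3) / 2 = lam1 / 2 + lam2 / 2 + lam3 / 2 := by ring
  have e12 : asc α1 r1 * asc α2 r2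
      = asc α1 k1 * asc (α1 + (k1:ℝ)) (r1 - k1) * (asc α2 k2 * asc (α2 + (k2:ℝ)) (r2 - k2)) := by
    rw [← e1, ← e2]
  simp only [c1, c3, c4, c5, e1, e2]
  have p1 : asc (α1 + α2 + α3) (r1 + r2) ≠ 0 := (asc_pos hA _).ne'
  have p2 : asc (α1 + α2 + α3 + ((r1 + r2 : ℕ) : ℝ)) (k1 + k2) ≠ 0 := (asc_pos hb0 _).ne'
  have p3 : asc α1 k1 ≠ 0 := (asc_pos h1 _).ne'
  have p4 : asc α2 k2 ≠ 0 := (asc_pos h2 _).ne'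
  have p2' : asc (α1 + α2 + α3 + ((r1:ℝ) + (r2:ℝ))) (k1 + k2) ≠ 0 := by rw [c1]; exact p2
  field_simp [p1, p2, p3, p4]
  push_cast
  ring
end

section
/- With the notation of the Non-central Dirichlet mixed moment formula, the mean cross product satisfies E[X'₁X'₂] = (α₁α₂/(α⁺)₂) e^{−λ⁺/2} ₁F₁(α⁺;α⁺+2;λ⁺/2) + ((α₁λ₂/2 + α₂λ₁/2)/((α⁺+1)₂)) e^{−λ⁺/2} ₁F₁(α⁺+1;α⁺+3;λ⁺/2) + ((λ₁/2)(λ₂/2)/((α⁺+2)₂)) e^{−λ⁺/2} ₁F₁(α⁺+2;α⁺+4;λ⁺/2). -/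
open Polynomial

open scoped ENNReal

namespace NcDirAux

noncomputable def P (x : ℝ) (n : ℕ) : ℝ := x ^ n / (n.factorial : ℝ)

lemma P_nonneg {x : ℝ} (hx : 0 ≤ x) (n : ℕ) : 0 ≤ P x n := by unfold P; positivity

lemma asc_zero (a : ℝ) : asc a 0 = 1 := by simp [asc]

lemma asc_succ (a : ℝ) (n : ℕ) : asc a (n + 1) = asc a n * (a + n) := by
  simp [asc, ascPochhammer_succ_right]

lemma asc_pos {a : ℝ} (ha : 0 < a) (n : ℕ) : 0 < asc a n := by
  induction n with
  | zero => simp [asc_zero]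
  | succ n ih =>
    rw [asc_succ]
    have hn : (0:ℝ) < a + n := by positivity
    exact mul_pos ih hn

lemma asc_le_asc_add_two {a : ℝ} (ha : 0 < a) (n : ℕ) : asc a n ≤ asc (a + 2) n := by
  induction n with
  | zero => simp [asc_zero]
  | succ n ih =>
    rw [asc_succ, asc_succ]
    have h1 : (0:ℝ) < a + n := by positivity
    have h3 : (0:ℝ) < asc a n := asc_pos ha n
    nlinarith

lemma asc_key (a : ℝ) (n : ℕ) :
    asc a n * ((a + n) * (a + n + 1)) = asc (a + 2) n * (a * (a + 1)) := by
  induction n with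
  | zero => simp [asc_zero]
  | succ n ih =>
    rw [asc_succ, asc_succ]
    push_cast
    linear_combination (a + n + 2) * ih

lemma inv_D_eq {a : ℝ} (ha : 0 < a) (n : ℕ) :
    1 / ((a + n) * (a + n + 1)) = asc a n / asc (a + 2) n / (a * (a + 1)) := by
  have h1 := asc_pos ha n
  have h2 := asc_pos (show (0:ℝ) < a + 2 by linarith) n
  have h3 : (0:ℝ) < a + n := by positivity
  have h4 : (0:ℝ) < a + n + 1 := by positivity
  field_simp
  linarith [asc_key a n]

lemma multinom (x y : ℝ) (n : ℕ) :
    ∑ p ∈ Finset.HasAntidiagonal.antidiagonal n, P x p.1 * P y p.2 = P (x + y) n := by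
  rw [Finset.Nat.sum_antidiagonal_eq_sum_range_succ_mk]
  unfold P
  rw [add_pow, Finset.sum_div]
  refine Finset.sum_congr rfl fun k hk => ?_
  rw [Finset.mem_range] at hk
  have hk' : k ≤ n := Nat.lt_succ_iff.mp hk
  have hfac := Nat.choose_mul_factorial_mul_factorial hk'
  have h1 : (0:ℝ) < k.factorial := by exact_mod_cast k.factorial_pos
  have h2 : (0:ℝ) < (n - k).factorial := by exact_mod_cast (n-k).factorial_pos
  have h3 : (0:ℝ) < n.factorial := by exact_mod_cast n.factorial_pos
  have hfacR : ((n.choose k : ℝ)) * k.factorial * (n - k).factorial = n.factorial := by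
    exact_mod_cast hfac
  field_simp
  linear_combination (-(x ^ k * y ^ (n - k))) * hfacR

lemma succ_mul_P (x : ℝ) (n : ℕ) : ((n + 1 : ℕ) : ℝ) * P x (n + 1) = x * P x n := by
  unfold P
  rw [Nat.factorial_succ]
  have h1 : (0:ℝ) < n.factorial := by exact_mod_cast n.factorial_pos
  push_cast
  field_simp
  ring

lemma tsum_eq_toReal_tsum_ofReal {ι : Type*} {u : ι → ℝ} (hu : ∀ i, 0 ≤ u i) :
    ∑' i, u i = (∑' i, ENNReal.ofReal (u i)).toReal := by
  by_cases h : Summable u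
  · rw [← ENNReal.ofReal_tsum_of_nonneg hu h, ENNReal.toReal_ofReal (tsum_nonneg hu)]
  · rw [tsum_eq_zero_of_not_summable h]
    by_cases h2 : (∑' i, ENNReal.ofReal (u i)) = ⊤
    · rw [h2]; simp
    · exfalso
      apply h
      have hs := ENNReal.summable_toReal h2
      have heq : (fun i => (ENNReal.ofReal (u i)).toReal) = u := by
        funext i; exact ENNReal.toReal_ofReal (hu i)
      rwa [heq] at hs

lemma core2 {x y : ℝ} (hx : 0 ≤ x) (hy : 0 ≤ y) (f : ℕ → ℝ) (hf : ∀ n, 0 ≤ f n) :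
    ∑' p : ℕ × ℕ, ENNReal.ofReal (P x p.1 * P y p.2 * f (p.1 + p.2))
      = ∑' n : ℕ, ENNReal.ofReal (P (x + y) n * f n) := by
  rw [← Finset.HasAntidiagonal.sigmaAntidiagonalEquivProd.tsum_eq
    (fun p : ℕ × ℕ => ENNReal.ofReal (P x p.1 * P y p.2 * f (p.1 + p.2)))]
  rw [ENNReal.tsum_sigma']
  refine tsum_congr fun n => ?_
  simp only [Finset.HasAntidiagonal.sigmaAntidiagonalEquivProd_apply]
  rw [Finset.tsum_subtype (Finset.HasAntidiagonal.antidiagonal n)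
    (fun p : ℕ × ℕ => ENNReal.ofReal (P x p.1 * P y p.2 * f (p.1 + p.2)))]
  calc ∑ c ∈ Finset.HasAntidiagonal.antidiagonal n, ENNReal.ofReal (P x c.1 * P y c.2 * f (c.1 + c.2))
      = ∑ c ∈ Finset.HasAntidiagonal.antidiagonal n, ENNReal.ofReal (P x c.1 * P y c.2 * f n) :=
        Finset.sum_congr rfl (fun c hc => by rw [Finset.HasAntidiagonal.mem_antidiagonal.mp hc])
    _ = ENNReal.ofReal (∑ c ∈ Finset.HasAntidiagonal.antidiagonal n, P x c.1 * P y c.2 * f n) :=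
        (ENNReal.ofReal_sum_of_nonneg (fun c _ =>
          mul_nonneg (mul_nonneg (P_nonneg hx _) (P_nonneg hy _)) (hf n))).symm
    _ = ENNReal.ofReal (P (x + y) n * f n) := by rw [← Finset.sum_mul, multinom]

lemma core3 {x y z : ℝ} (hx : 0 ≤ x) (hy : 0 ≤ y) (hz : 0 ≤ z) (f : ℕ → ℝ) (hf : ∀ n, 0 ≤ f n) :
    ∑' j : ℕ × ℕ × ℕ,
        ENNReal.ofReal (P x j.1 * P y j.2.1 * P z j.2.2 * f (j.1 + j.2.1 + j.2.2))
      = ∑' n : ℕ, ENNReal.ofReal (P (x + y + z) n * f n) := by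
  rw [ENNReal.tsum_prod']
  have inner : ∀ a : ℕ,
      (∑' q : ℕ × ℕ, ENNReal.ofReal (P x a * P y q.1 * P z q.2 * f (a + q.1 + q.2)))
        = ENNReal.ofReal (P x a) * ∑' m : ℕ, ENNReal.ofReal (P (y + z) m * f (a + m)) := by
    intro a
    rw [← core2 hy hz (fun m => f (a + m)) (fun m => hf _), ← ENNReal.tsum_mul_left]
    refine tsum_congr fun q => ?_
    rw [← ENNReal.ofReal_mul (P_nonneg hx a)]
    congr 1
    rw [show a + (q.1 + q.2) = a + q.1 + q.2 from (add_assoc a q.1 q.2).symm]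
    ring
  simp_rw [inner]
  have hmul : ∀ a : ℕ,
      ENNReal.ofReal (P x a) * (∑' m : ℕ, ENNReal.ofReal (P (y + z) m * f (a + m)))
        = ∑' m : ℕ, ENNReal.ofReal (P x a * (P (y + z) m * f (a + m))) := by
    intro a
    rw [← ENNReal.tsum_mul_left]
    exact tsum_congr fun m => (ENNReal.ofReal_mul (P_nonneg hx a)).symm
  simp_rw [hmul]
  have hprod : (∑' p : ℕ × ℕ, ENNReal.ofReal (P x p.1 * (P (y + z) p.2 * f (p.1 + p.2))))
      = ∑' (a : ℕ) (m : ℕ), ENNReal.ofReal (P x a * (P (y + z) m * f (a + m))) :=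
    ENNReal.tsum_prod'
  rw [← hprod]
  have := core2 hx (by positivity : (0:ℝ) ≤ y + z) f hf
  rw [show x + (y + z) = x + y + z from (add_assoc x y z).symm] at this
  rw [← this]
  refine tsum_congr fun p => ?_
  congr 1
  ring

lemma shift_snd (f : ℕ × ℕ × ℕ → ℝ≥0∞) (hf : ∀ j : ℕ × ℕ × ℕ, j.2.1 = 0 → f j = 0) :
    ∑' j : ℕ × ℕ × ℕ, f (j.1, j.2.1 + 1, j.2.2) = ∑' j, f j := by
  apply Function.Injective.tsum_eq
  · rintro ⟨a, b, c⟩ ⟨d, e, g⟩ h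
    simp only [Prod.mk.injEq] at h
    obtain ⟨h1, h2, h3⟩ := h
    simp [h1, h3, Nat.succ_injective h2]
  · rintro ⟨a, b, c⟩ hj
    rcases b with _ | b
    · exact absurd (hf (a, 0, c) rfl) hj
    · exact ⟨(a, b, c), rfl⟩

lemma shift_fst (f : ℕ × ℕ × ℕ → ℝ≥0∞) (hf : ∀ j : ℕ × ℕ × ℕ, j.1 = 0 → f j = 0) :
    ∑' j : ℕ × ℕ × ℕ, f (j.1 + 1, j.2.1, j.2.2) = ∑' j, f j := by
  apply Function.Injective.tsum_eq
  · rintro ⟨a, b, c⟩ ⟨d, e, g⟩ h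
    simp only [Prod.mk.injEq] at h
    obtain ⟨h1, h2, h3⟩ := h
    simp [h2, h3, Nat.succ_injective h1]
  · rintro ⟨a, b, c⟩ hj
    rcases a with _ | a
    · exact absurd (hf (0, b, c) rfl) hj
    · exact ⟨(a, b, c), rfl⟩

lemma g_summable {a L : ℝ} (ha : 0 < a) (hL : 0 ≤ L) :
    Summable (fun n : ℕ => asc a n / asc (a + 2) n * L ^ n / (n.factorial : ℝ)) := by
  refine Summable.of_nonneg_of_le (fun n => ?_) (fun n => ?_) (Real.summable_pow_div_factorial L)
  · have h1 := asc_pos ha n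
    have h2 := asc_pos (show (0:ℝ) < a + 2 by linarith) n
    positivity
  · have h1 := asc_pos ha n
    have h2 := asc_pos (show (0:ℝ) < a + 2 by linarith) n
    have hr : asc a n / asc (a + 2) n ≤ 1 := div_le_one_of_le₀ (asc_le_asc_add_two ha n) h2.le
    have hfpos : (0:ℝ) < n.factorial := by exact_mod_cast n.factorial_pos
    calc asc a n / asc (a + 2) n * L ^ n / (n.factorial : ℝ)
        ≤ 1 * L ^ n / (n.factorial : ℝ) := by gcongr
      _ = L ^ n / (n.factorial : ℝ) := by ring

lemma F11_nonneg {a b L : ℝ} (ha : 0 < a) (hb : 0 < b) (hL : 0 ≤ L) : 0 ≤ F11 a b L := by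
  refine tsum_nonneg fun i => ?_
  have h1 := asc_pos ha i
  have h2 := asc_pos hb i
  positivity

lemma piece {a L : ℝ} (ha : 0 < a) (hL : 0 ≤ L) (f : ℕ → ℝ)
    (hfa : ∀ n : ℕ, f n = 1 / ((a + n) * (a + n + 1))) :
    ∑' n : ℕ, ENNReal.ofReal (P L n * f n)
      = ENNReal.ofReal (1 / (a * (a + 1)) * F11 a (a + 2) L) := by
  have ha1 : (0:ℝ) < a * (a + 1) := by nlinarith
  have key : ∀ n : ℕ, P L n * f n
      = 1 / (a * (a + 1)) * (asc a n / asc (a + 2) n * L ^ n / (n.factorial : ℝ)) := by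
    intro n
    rw [hfa, inv_D_eq ha]
    unfold P
    ring
  have hg : ∀ n : ℕ, 0 ≤ asc a n / asc (a + 2) n * L ^ n / (n.factorial : ℝ) := by
    intro n
    have h1 := asc_pos ha n
    have h2 := asc_pos (show (0:ℝ) < a + 2 by linarith) n
    positivity
  calc ∑' n : ℕ, ENNReal.ofReal (P L n * f n)
      = ∑' n : ℕ, ENNReal.ofReal (1 / (a * (a + 1)))
          * ENNReal.ofReal (asc a n / asc (a + 2) n * L ^ n / (n.factorial : ℝ)) := by
        refine tsum_congr fun n => ?_
        rw [key n, ENNReal.ofReal_mul (by positivity)]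
    _ = ENNReal.ofReal (1 / (a * (a + 1)))
          * ∑' n : ℕ, ENNReal.ofReal (asc a n / asc (a + 2) n * L ^ n / (n.factorial : ℝ)) :=
        ENNReal.tsum_mul_left
    _ = ENNReal.ofReal (1 / (a * (a + 1))) * ENNReal.ofReal (F11 a (a + 2) L) := by
        rw [← ENNReal.ofReal_tsum_of_nonneg hg (g_summable ha hL)]
        rfl
    _ = ENNReal.ofReal (1 / (a * (a + 1)) * F11 a (a + 2) L) :=
        (ENNReal.ofReal_mul (by positivity)).symm

lemma main_ennreal (α1 α2 α3 x1 x2 x3 : ℝ) (h1 : 0 < α1) (h2 : 0 < α2) (h3 : 0 < α3)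
    (hx1 : 0 ≤ x1) (hx2 : 0 ≤ x2) (hx3 : 0 ≤ x3) :
    ∑' j : ℕ × ℕ × ℕ, ENNReal.ofReal (P x1 j.1 * P x2 j.2.1 * P x3 j.2.2 *
        ((α1 + j.1) * (α2 + j.2.1) *
          (1 / ((α1 + α2 + α3 + (j.1 + j.2.1 + j.2.2 : ℕ)) *
            (α1 + α2 + α3 + (j.1 + j.2.1 + j.2.2 : ℕ) + 1)))))
      = ENNReal.ofReal (α1 * α2 / ((α1 + α2 + α3) * (α1 + α2 + α3 + 1)) *
            F11 (α1 + α2 + α3) (α1 + α2 + α3 + 2) (x1 + x2 + x3))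
        + ENNReal.ofReal ((α1 * x2 + α2 * x1) / ((α1 + α2 + α3 + 1) * (α1 + α2 + α3 + 2)) *
            F11 (α1 + α2 + α3 + 1) (α1 + α2 + α3 + 3) (x1 + x2 + x3))
        + ENNReal.ofReal (x1 * x2 / ((α1 + α2 + α3 + 2) * (α1 + α2 + α3 + 3)) *
            F11 (α1 + α2 + α3 + 2) (α1 + α2 + α3 + 4) (x1 + x2 + x3)) := by
  set s : ℝ := α1 + α2 + α3 with hs
  have hs0 : 0 < s := by positivity
  set L : ℝ := x1 + x2 + x3 with hLdef
  have hL0 : 0 ≤ L := by positivity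
  set f0 : ℕ → ℝ := fun n => 1 / ((s + n) * (s + n + 1)) with hf0
  have hf0nn : ∀ n : ℕ, 0 ≤ f0 n := by
    intro n
    have hp1 : (0:ℝ) < s + n := by positivity
    have hp2 : (0:ℝ) < s + n + 1 := by positivity
    rw [hf0]
    positivity
  set A : ℕ × ℕ × ℕ → ℝ := fun j =>
    α1 * α2 * (P x1 j.1 * P x2 j.2.1 * P x3 j.2.2 * f0 (j.1 + j.2.1 + j.2.2)) with hA
  set B : ℕ × ℕ × ℕ → ℝ := fun j =>
    α1 * ((j.2.1 : ℝ) * P x2 j.2.1) * P x1 j.1 * P x3 j.2.2 * f0 (j.1 + j.2.1 + j.2.2) with hB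
  set C : ℕ × ℕ × ℕ → ℝ := fun j =>
    α2 * ((j.1 : ℝ) * P x1 j.1) * P x2 j.2.1 * P x3 j.2.2 * f0 (j.1 + j.2.1 + j.2.2) with hC
  set D : ℕ × ℕ × ℕ → ℝ := fun j =>
    ((j.1 : ℝ) * P x1 j.1) * ((j.2.1 : ℝ) * P x2 j.2.1) * P x3 j.2.2
      * f0 (j.1 + j.2.1 + j.2.2) with hD
  have hAnn : ∀ j, 0 ≤ A j := by
    intro j
    have := P_nonneg hx1 j.1; have := P_nonneg hx2 j.2.1; have := P_nonneg hx3 j.2.2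
    have := hf0nn (j.1 + j.2.1 + j.2.2)
    rw [hA]; positivity
  have hBnn : ∀ j, 0 ≤ B j := by
    intro j
    have := P_nonneg hx1 j.1; have := P_nonneg hx2 j.2.1; have := P_nonneg hx3 j.2.2
    have := hf0nn (j.1 + j.2.1 + j.2.2)
    rw [hB]; positivity
  have hCnn : ∀ j, 0 ≤ C j := by
    intro j
    have := P_nonneg hx1 j.1; have := P_nonneg hx2 j.2.1; have := P_nonneg hx3 j.2.2
    have := hf0nn (j.1 + j.2.1 + j.2.2)
    rw [hC]; positivity
  have hDnn : ∀ j, 0 ≤ D j := by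
    intro j
    have := P_nonneg hx1 j.1; have := P_nonneg hx2 j.2.1; have := P_nonneg hx3 j.2.2
    have := hf0nn (j.1 + j.2.1 + j.2.2)
    rw [hD]; positivity
  have hsplit : ∀ j : ℕ × ℕ × ℕ, ENNReal.ofReal (P x1 j.1 * P x2 j.2.1 * P x3 j.2.2 *
        ((α1 + j.1) * (α2 + j.2.1) *
          (1 / ((s + (j.1 + j.2.1 + j.2.2 : ℕ)) * (s + (j.1 + j.2.1 + j.2.2 : ℕ) + 1)))))
      = ENNReal.ofReal (A j) + ENNReal.ofReal (B j) + ENNReal.ofReal (C j)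
        + ENNReal.ofReal (D j) := by
    intro j
    rw [← ENNReal.ofReal_add (hAnn j) (hBnn j),
      ← ENNReal.ofReal_add (add_nonneg (hAnn j) (hBnn j)) (hCnn j),
      ← ENNReal.ofReal_add (add_nonneg (add_nonneg (hAnn j) (hBnn j)) (hCnn j)) (hDnn j)]
    congr 1
    rw [hA, hB, hC, hD, hf0]
    ring
  rw [tsum_congr hsplit, ENNReal.tsum_add, ENNReal.tsum_add, ENNReal.tsum_add]
  -- piece A
  have hSA : ∑' j : ℕ × ℕ × ℕ, ENNReal.ofReal (A j)
      = ENNReal.ofReal (α1 * α2 * (1 / (s * (s + 1)) * F11 s (s + 2) L)) := by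
    have h12 : (0:ℝ) ≤ α1 * α2 := by positivity
    calc ∑' j : ℕ × ℕ × ℕ, ENNReal.ofReal (A j)
        = ∑' j : ℕ × ℕ × ℕ, ENNReal.ofReal (α1 * α2) * ENNReal.ofReal
            (P x1 j.1 * P x2 j.2.1 * P x3 j.2.2 * f0 (j.1 + j.2.1 + j.2.2)) := by
          refine tsum_congr fun j => ?_
          rw [hA, ENNReal.ofReal_mul h12]
      _ = ENNReal.ofReal (α1 * α2) * ∑' n : ℕ, ENNReal.ofReal (P L n * f0 n) := by
          rw [ENNReal.tsum_mul_left, core3 hx1 hx2 hx3 f0 hf0nn]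
      _ = ENNReal.ofReal (α1 * α2) * ENNReal.ofReal (1 / (s * (s + 1)) * F11 s (s + 2) L) := by
          rw [piece hs0 hL0 f0 (fun n => rfl)]
      _ = ENNReal.ofReal (α1 * α2 * (1 / (s * (s + 1)) * F11 s (s + 2) L)) :=
          (ENNReal.ofReal_mul h12).symm
  -- piece B
  have hs1 : (0:ℝ) < s + 1 := by linarith
  have hs2 : (0:ℝ) < s + 2 := by linarith
  have hSB : ∑' j : ℕ × ℕ × ℕ, ENNReal.ofReal (B j)
      = ENNReal.ofReal (α1 * x2 * (1 / ((s + 1) * (s + 2)) * F11 (s + 1) (s + 3) L)) := by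
    have h12 : (0:ℝ) ≤ α1 * x2 := by positivity
    have hvan : ∀ j : ℕ × ℕ × ℕ, j.2.1 = 0 → ENNReal.ofReal (B j) = 0 := by
      intro j hj
      rw [hB]
      simp [hj]
    rw [← shift_snd (fun j => ENNReal.ofReal (B j)) hvan]
    have hterm : ∀ j : ℕ × ℕ × ℕ, B (j.1, j.2.1 + 1, j.2.2)
        = α1 * x2 * (P x1 j.1 * P x2 j.2.1 * P x3 j.2.2
            * (fun n => f0 (n + 1)) (j.1 + j.2.1 + j.2.2)) := by
      intro j
      rw [hB]
      show α1 * (((j.2.1 + 1 : ℕ) : ℝ) * P x2 (j.2.1 + 1)) * P x1 j.1 * P x3 j.2.2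
          * f0 (j.1 + (j.2.1 + 1) + j.2.2) = _
      rw [succ_mul_P, show j.1 + (j.2.1 + 1) + j.2.2 = j.1 + j.2.1 + j.2.2 + 1 from by omega]
      ring
    calc ∑' j : ℕ × ℕ × ℕ, ENNReal.ofReal (B (j.1, j.2.1 + 1, j.2.2))
        = ∑' j : ℕ × ℕ × ℕ, ENNReal.ofReal (α1 * x2) * ENNReal.ofReal
            (P x1 j.1 * P x2 j.2.1 * P x3 j.2.2
              * (fun n => f0 (n + 1)) (j.1 + j.2.1 + j.2.2)) := by
          refine tsum_congr fun j => ?_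
          rw [hterm j, ENNReal.ofReal_mul h12]
      _ = ENNReal.ofReal (α1 * x2)
            * ∑' n : ℕ, ENNReal.ofReal (P L n * (fun n => f0 (n + 1)) n) := by
          rw [ENNReal.tsum_mul_left,
            core3 hx1 hx2 hx3 (fun n => f0 (n + 1)) (fun n => hf0nn _)]
      _ = ENNReal.ofReal (α1 * x2)
            * ENNReal.ofReal (1 / ((s + 1) * ((s + 1) + 1)) * F11 (s + 1) ((s + 1) + 2) L) := by
          rw [piece hs1 hL0 (fun n => f0 (n + 1)) (fun n => by
            show f0 (n + 1) = _
            rw [hf0]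
            push_cast
            ring_nf)]
      _ = ENNReal.ofReal (α1 * x2 * (1 / ((s + 1) * (s + 2)) * F11 (s + 1) (s + 3) L)) := by
          rw [show (s + 1) + 1 = s + 2 from by ring, show (s + 1) + 2 = s + 3 from by ring,
            ← ENNReal.ofReal_mul h12]
  -- piece C
  have hSC : ∑' j : ℕ × ℕ × ℕ, ENNReal.ofReal (C j)
      = ENNReal.ofReal (α2 * x1 * (1 / ((s + 1) * (s + 2)) * F11 (s + 1) (s + 3) L)) := by
    have h12 : (0:ℝ) ≤ α2 * x1 := by positivity
    have hvan : ∀ j : ℕ × ℕ × ℕ, j.1 = 0 → ENNReal.ofReal (C j) = 0 := by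
      intro j hj
      rw [hC]
      simp [hj]
    rw [← shift_fst (fun j => ENNReal.ofReal (C j)) hvan]
    have hterm : ∀ j : ℕ × ℕ × ℕ, C (j.1 + 1, j.2.1, j.2.2)
        = α2 * x1 * (P x1 j.1 * P x2 j.2.1 * P x3 j.2.2
            * (fun n => f0 (n + 1)) (j.1 + j.2.1 + j.2.2)) := by
      intro j
      rw [hC]
      show α2 * (((j.1 + 1 : ℕ) : ℝ) * P x1 (j.1 + 1)) * P x2 j.2.1 * P x3 j.2.2
          * f0 (j.1 + 1 + j.2.1 + j.2.2) = _
      rw [succ_mul_P, show j.1 + 1 + j.2.1 + j.2.2 = j.1 + j.2.1 + j.2.2 + 1 from by omega]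
      ring
    calc ∑' j : ℕ × ℕ × ℕ, ENNReal.ofReal (C (j.1 + 1, j.2.1, j.2.2))
        = ∑' j : ℕ × ℕ × ℕ, ENNReal.ofReal (α2 * x1) * ENNReal.ofReal
            (P x1 j.1 * P x2 j.2.1 * P x3 j.2.2
              * (fun n => f0 (n + 1)) (j.1 + j.2.1 + j.2.2)) := by
          refine tsum_congr fun j => ?_
          rw [hterm j, ENNReal.ofReal_mul h12]
      _ = ENNReal.ofReal (α2 * x1)
            * ∑' n : ℕ, ENNReal.ofReal (P L n * (fun n => f0 (n + 1)) n) := by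
          rw [ENNReal.tsum_mul_left,
            core3 hx1 hx2 hx3 (fun n => f0 (n + 1)) (fun n => hf0nn _)]
      _ = ENNReal.ofReal (α2 * x1)
            * ENNReal.ofReal (1 / ((s + 1) * ((s + 1) + 1)) * F11 (s + 1) ((s + 1) + 2) L) := by
          rw [piece hs1 hL0 (fun n => f0 (n + 1)) (fun n => by
            show f0 (n + 1) = _
            rw [hf0]
            push_cast
            ring_nf)]
      _ = ENNReal.ofReal (α2 * x1 * (1 / ((s + 1) * (s + 2)) * F11 (s + 1) (s + 3) L)) := by
          rw [show (s + 1) + 1 = s + 2 from by ring, show (s + 1) + 2 = s + 3 from by ring,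
            ← ENNReal.ofReal_mul h12]
  -- piece D
  have hSD : ∑' j : ℕ × ℕ × ℕ, ENNReal.ofReal (D j)
      = ENNReal.ofReal (x1 * x2 * (1 / ((s + 2) * (s + 3)) * F11 (s + 2) (s + 4) L)) := by
    have h12 : (0:ℝ) ≤ x1 * x2 := by positivity
    have hvan1 : ∀ j : ℕ × ℕ × ℕ, j.1 = 0 → ENNReal.ofReal (D j) = 0 := by
      intro j hj
      rw [hD]
      simp [hj]
    rw [← shift_fst (fun j => ENNReal.ofReal (D j)) hvan1]
    have hvan2 : ∀ j : ℕ × ℕ × ℕ, j.2.1 = 0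
        → ENNReal.ofReal (D (j.1 + 1, j.2.1, j.2.2)) = 0 := by
      intro j hj
      rw [hD]
      simp [hj]
    rw [← shift_snd (fun j => ENNReal.ofReal (D (j.1 + 1, j.2.1, j.2.2))) hvan2]
    have hterm : ∀ j : ℕ × ℕ × ℕ, D (j.1 + 1, j.2.1 + 1, j.2.2)
        = x1 * x2 * (P x1 j.1 * P x2 j.2.1 * P x3 j.2.2
            * (fun n => f0 (n + 2)) (j.1 + j.2.1 + j.2.2)) := by
      intro j
      rw [hD]
      show (((j.1 + 1 : ℕ) : ℝ) * P x1 (j.1 + 1)) * (((j.2.1 + 1 : ℕ) : ℝ) * P x2 (j.2.1 + 1))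
          * P x3 j.2.2 * f0 (j.1 + 1 + (j.2.1 + 1) + j.2.2) = _
      rw [succ_mul_P, succ_mul_P,
        show j.1 + 1 + (j.2.1 + 1) + j.2.2 = j.1 + j.2.1 + j.2.2 + 2 from by omega]
      ring
    calc ∑' j : ℕ × ℕ × ℕ, ENNReal.ofReal (D (j.1 + 1, j.2.1 + 1, j.2.2))
        = ∑' j : ℕ × ℕ × ℕ, ENNReal.ofReal (x1 * x2) * ENNReal.ofReal
            (P x1 j.1 * P x2 j.2.1 * P x3 j.2.2
              * (fun n => f0 (n + 2)) (j.1 + j.2.1 + j.2.2)) := by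
          refine tsum_congr fun j => ?_
          rw [hterm j, ENNReal.ofReal_mul h12]
      _ = ENNReal.ofReal (x1 * x2)
            * ∑' n : ℕ, ENNReal.ofReal (P L n * (fun n => f0 (n + 2)) n) := by
          rw [ENNReal.tsum_mul_left,
            core3 hx1 hx2 hx3 (fun n => f0 (n + 2)) (fun n => hf0nn _)]
      _ = ENNReal.ofReal (x1 * x2)
            * ENNReal.ofReal (1 / ((s + 2) * ((s + 2) + 1)) * F11 (s + 2) ((s + 2) + 2) L) := by
          rw [piece hs2 hL0 (fun n => f0 (n + 2)) (fun n => by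
            show f0 (n + 2) = _
            rw [hf0]
            push_cast
            ring_nf)]
      _ = ENNReal.ofReal (x1 * x2 * (1 / ((s + 2) * (s + 3)) * F11 (s + 2) (s + 4) L)) := by
          rw [show (s + 2) + 1 = s + 3 from by ring, show (s + 2) + 2 = s + 4 from by ring,
            ← ENNReal.ofReal_mul h12]
  rw [hSA, hSB, hSC, hSD]
  have hF0 := F11_nonneg hs0 (show (0:ℝ) < s + 2 by linarith) hL0
  have hF1 := F11_nonneg hs1 (show (0:ℝ) < s + 3 by linarith) hL0
  have hF2 := F11_nonneg hs2 (show (0:ℝ) < s + 4 by linarith) hL0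
  have hk1 : (0:ℝ) ≤ 1 / ((s + 1) * (s + 2)) := by positivity
  have hbc : ENNReal.ofReal (α1 * x2 * (1 / ((s + 1) * (s + 2)) * F11 (s + 1) (s + 3) L))
      + ENNReal.ofReal (α2 * x1 * (1 / ((s + 1) * (s + 2)) * F11 (s + 1) (s + 3) L))
      = ENNReal.ofReal ((α1 * x2 + α2 * x1) / ((s + 1) * (s + 2)) * F11 (s + 1) (s + 3) L) := by
    rw [← ENNReal.ofReal_add
      (mul_nonneg (by positivity) (mul_nonneg hk1 hF1))
      (mul_nonneg (by positivity) (mul_nonneg hk1 hF1))]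
    congr 1
    ring
  have hassoc : ∀ a b c d : ℝ≥0∞, a + b + c + d = a + (b + c) + d := fun a b c d => by ring
  rw [hassoc, hbc]
  congr 1
  · congr 1
    · congr 1
      ring
  · congr 1
    ring

end NcDirAux

/-- The mean cross product `E[X'₁X'₂]` of the bivariate Non-central Dirichlet distribution,
defined through its Poisson mixture representation. -/
theorem ncdir_mean_cross_product (α1 α2 α3 lam1 lam2 lam3 : ℝ)
    (h1 : 0 < α1) (h2 : 0 < α2) (h3 : 0 < α3)
    (hl1 : 0 ≤ lam1) (hl2 : 0 ≤ lam2) (hl3 : 0 ≤ lam3) :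
    (∑' j : ℕ × ℕ × ℕ,
        (Real.exp (-(lam1 / 2)) * (lam1 / 2) ^ j.1 / (j.1.factorial : ℝ)) *
          (Real.exp (-(lam2 / 2)) * (lam2 / 2) ^ j.2.1 / (j.2.1.factorial : ℝ)) *
          (Real.exp (-(lam3 / 2)) * (lam3 / 2) ^ j.2.2 / (j.2.2.factorial : ℝ)) *
          ((α1 + j.1) * (α2 + j.2.1) /
            ((α1 + α2 + α3 + (j.1 + j.2.1 + j.2.2)) *
              (α1 + α2 + α3 + (j.1 + j.2.1 + j.2.2) + 1)))) =
      α1 * α2 / ((α1 + α2 + α3) * (α1 + α2 + α3 + 1)) *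
          Real.exp (-((lam1 + lam2 + lam3) / 2)) *
          F11 (α1 + α2 + α3) (α1 + α2 + α3 + 2) ((lam1 + lam2 + lam3) / 2) +
        (α1 * (lam2 / 2) + α2 * (lam1 / 2)) /
            ((α1 + α2 + α3 + 1) * (α1 + α2 + α3 + 2)) *
          Real.exp (-((lam1 + lam2 + lam3) / 2)) *
          F11 (α1 + α2 + α3 + 1) (α1 + α2 + α3 + 3) ((lam1 + lam2 + lam3) / 2) +
        (lam1 / 2) * (lam2 / 2) / ((α1 + α2 + α3 + 2) * (α1 + α2 + α3 + 3)) *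
          Real.exp (-((lam1 + lam2 + lam3) / 2)) *
          F11 (α1 + α2 + α3 + 2) (α1 + α2 + α3 + 4) ((lam1 + lam2 + lam3) / 2) := by
  have hx1 : (0:ℝ) ≤ lam1 / 2 := by linarith
  have hx2 : (0:ℝ) ≤ lam2 / 2 := by linarith
  have hx3 : (0:ℝ) ≤ lam3 / 2 := by linarith
  have hs0 : (0:ℝ) < α1 + α2 + α3 := by positivity
  rw [show (lam1 + lam2 + lam3) / 2 = lam1 / 2 + lam2 / 2 + lam3 / 2 from by ring]
  have hexp : Real.exp (-(lam1 / 2)) * Real.exp (-(lam2 / 2)) * Real.exp (-(lam3 / 2))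
      = Real.exp (-(lam1 / 2 + lam2 / 2 + lam3 / 2)) := by
    rw [← Real.exp_add, ← Real.exp_add]
    ring_nf
  have hterm : ∀ j : ℕ × ℕ × ℕ,
      (Real.exp (-(lam1 / 2)) * (lam1 / 2) ^ j.1 / (j.1.factorial : ℝ)) *
          (Real.exp (-(lam2 / 2)) * (lam2 / 2) ^ j.2.1 / (j.2.1.factorial : ℝ)) *
          (Real.exp (-(lam3 / 2)) * (lam3 / 2) ^ j.2.2 / (j.2.2.factorial : ℝ)) *
          ((α1 + j.1) * (α2 + j.2.1) /
            ((α1 + α2 + α3 + (j.1 + j.2.1 + j.2.2)) *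
              (α1 + α2 + α3 + (j.1 + j.2.1 + j.2.2) + 1)))
        = Real.exp (-(lam1 / 2 + lam2 / 2 + lam3 / 2)) *
          (NcDirAux.P (lam1 / 2) j.1 * NcDirAux.P (lam2 / 2) j.2.1 * NcDirAux.P (lam3 / 2) j.2.2 *
            ((α1 + j.1) * (α2 + j.2.1) *
              (1 / ((α1 + α2 + α3 + (j.1 + j.2.1 + j.2.2 : ℕ)) *
                (α1 + α2 + α3 + (j.1 + j.2.1 + j.2.2 : ℕ) + 1))))) := by
    intro j
    rw [← hexp]
    unfold NcDirAux.P
    push_cast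
    ring
  rw [tsum_congr hterm, tsum_mul_left]
  have hTnn : ∀ j : ℕ × ℕ × ℕ,
      0 ≤ NcDirAux.P (lam1 / 2) j.1 * NcDirAux.P (lam2 / 2) j.2.1 * NcDirAux.P (lam3 / 2) j.2.2 *
        ((α1 + j.1) * (α2 + j.2.1) *
          (1 / ((α1 + α2 + α3 + (j.1 + j.2.1 + j.2.2 : ℕ)) *
            (α1 + α2 + α3 + (j.1 + j.2.1 + j.2.2 : ℕ) + 1)))) := by
    intro j
    have p1 := NcDirAux.P_nonneg hx1 j.1
    have p2 := NcDirAux.P_nonneg hx2 j.2.1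
    have p3 := NcDirAux.P_nonneg hx3 j.2.2
    have q1 : (0:ℝ) < α1 + j.1 := by positivity
    have q2 : (0:ℝ) < α2 + j.2.1 := by positivity
    have q3 : (0:ℝ) < α1 + α2 + α3 + (j.1 + j.2.1 + j.2.2 : ℕ) := by positivity
    have q4 : (0:ℝ) < α1 + α2 + α3 + (j.1 + j.2.1 + j.2.2 : ℕ) + 1 := by positivity
    positivity
  rw [NcDirAux.tsum_eq_toReal_tsum_ofReal hTnn,
    NcDirAux.main_ennreal α1 α2 α3 (lam1 / 2) (lam2 / 2) (lam3 / 2) h1 h2 h3 hx1 hx2 hx3]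
  have hL0 : (0:ℝ) ≤ lam1 / 2 + lam2 / 2 + lam3 / 2 := by linarith
  have hF0 := NcDirAux.F11_nonneg hs0 (show (0:ℝ) < α1 + α2 + α3 + 2 by linarith) hL0
  have hF1 := NcDirAux.F11_nonneg (show (0:ℝ) < α1 + α2 + α3 + 1 by linarith)
    (show (0:ℝ) < α1 + α2 + α3 + 3 by linarith) hL0
  have hF2 := NcDirAux.F11_nonneg (show (0:ℝ) < α1 + α2 + α3 + 2 by linarith)
    (show (0:ℝ) < α1 + α2 + α3 + 4 by linarith) hL0
  have hr0 : (0:ℝ) ≤ α1 * α2 / ((α1 + α2 + α3) * (α1 + α2 + α3 + 1)) *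
      F11 (α1 + α2 + α3) (α1 + α2 + α3 + 2) (lam1 / 2 + lam2 / 2 + lam3 / 2) := by
    apply mul_nonneg _ hF0
    positivity
  have hr1 : (0:ℝ) ≤ (α1 * (lam2 / 2) + α2 * (lam1 / 2)) /
      ((α1 + α2 + α3 + 1) * (α1 + α2 + α3 + 2)) *
      F11 (α1 + α2 + α3 + 1) (α1 + α2 + α3 + 3) (lam1 / 2 + lam2 / 2 + lam3 / 2) := by
    apply mul_nonneg _ hF1
    positivity
  have hr2 : (0:ℝ) ≤ lam1 / 2 * (lam2 / 2) / ((α1 + α2 + α3 + 2) * (α1 + α2 + α3 + 3)) *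
      F11 (α1 + α2 + α3 + 2) (α1 + α2 + α3 + 4) (lam1 / 2 + lam2 / 2 + lam3 / 2) := by
    apply mul_nonneg _ hF2
    positivity
  rw [ENNReal.toReal_add (ENNReal.add_ne_top.mpr ⟨ENNReal.ofReal_ne_top, ENNReal.ofReal_ne_top⟩) ENNReal.ofReal_ne_top,
    ENNReal.toReal_add ENNReal.ofReal_ne_top ENNReal.ofReal_ne_top,
    ENNReal.toReal_ofReal hr0, ENNReal.toReal_ofReal hr1, ENNReal.toReal_ofReal hr2]
  ring
end
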